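/- arXiv:0901.1587 — 4 statements merged into one kernel-verified Lean document; each statement's English description precedes it below -/
import Mathlib

section
/- For every positive definite quadratic form Q in d ≥ 1 variables, the arithmetical minimum satisfies λ(Q) ≤ (det Q)^{1/d} · (4/3)^{(d-1)/2}. -/
open Matrix

/-- The real vector corresponding to an integral vector. -/
def castVec {d : ℕ} (x : Fin d → ℤ) : Fin d → ℝ := fun i => (x i : ℝ)

/-- Evaluation `Q[x] = xᵗ Q x` of a quadratic form at an integral vector. -/
def qeval {d : ℕ} (Q : Matrix (Fin d) (Fin d) ℝ) (x : Fin d → ℤ) : ℝ :=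
  castVec x ⬝ᵥ Q.mulVec (castVec x)



lemma castVec_eq_zero {d : ℕ} {x : Fin d → ℤ} (h : castVec x = 0) : x = 0 := by
  funext i
  have := congrFun h i
  simpa [castVec] using this

lemma qeval_pos {d : ℕ} {Q : Matrix (Fin d) (Fin d) ℝ} (hQ : Q.PosDef)
    {x : Fin d → ℤ} (hx : x ≠ 0) : 0 < qeval Q x := by
  have hc : castVec x ≠ 0 := fun h => hx (castVec_eq_zero h)
  simpa [qeval] using hQ.dotProduct_mulVec_pos hc

lemma continuous_quad {d : ℕ} (Q : Matrix (Fin d) (Fin d) ℝ) :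
    Continuous fun v : Fin d → ℝ => v ⬝ᵥ Q.mulVec v := by
  apply continuous_finset_sum
  intro i _
  refine (continuous_apply i).mul ?_
  simp only [Matrix.mulVec, dotProduct]
  exact continuous_finset_sum _ fun j _ => continuous_const.mul (continuous_apply j)

lemma quad_smul {d : ℕ} (Q : Matrix (Fin d) (Fin d) ℝ) (c : ℝ) (v : Fin d → ℝ) :
    (c • v) ⬝ᵥ Q.mulVec (c • v) = c ^ 2 * (v ⬝ᵥ Q.mulVec v) := by
  simp [Matrix.mulVec_smul, smul_dotProduct, dotProduct_smul]
  ring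

/-- Positive definite forms are bounded below by a positive multiple of the sup-norm squared. -/
lemma exists_quad_lower {d : ℕ} (hd : 0 < d) (Q : Matrix (Fin d) (Fin d) ℝ) (hQ : Q.PosDef) :
    ∃ m : ℝ, 0 < m ∧ ∀ v : Fin d → ℝ, m * ‖v‖ ^ 2 ≤ v ⬝ᵥ Q.mulVec v := by
  have hne : (Metric.sphere (0 : Fin d → ℝ) 1).Nonempty := by
    refine ⟨Pi.single ⟨0, hd⟩ 1, ?_⟩
    rw [mem_sphere_iff_norm, sub_zero, Pi.norm_single]
    norm_num
  obtain ⟨u, hu, hmin⟩ := (isCompact_sphere (0 : Fin d → ℝ) 1).exists_isMinOn hne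
    (continuous_quad Q).continuousOn
  have hu1 : ‖u‖ = 1 := by simpa [mem_sphere_iff_norm] using hu
  have hu0 : u ≠ 0 := by
    intro h; rw [h] at hu1; simp at hu1
  refine ⟨u ⬝ᵥ Q.mulVec u, by simpa using hQ.dotProduct_mulVec_pos hu0, ?_⟩
  intro v
  rcases eq_or_ne v 0 with rfl | hv
  · simp
  · have hnv : ‖v‖ ≠ 0 := norm_ne_zero_iff.mpr hv
    set w : Fin d → ℝ := ‖v‖⁻¹ • v with hw
    have hwsph : w ∈ Metric.sphere (0 : Fin d → ℝ) 1 := by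
      simp [hw, mem_sphere_iff_norm, norm_smul, abs_of_nonneg (inv_nonneg.mpr (norm_nonneg v)),
        inv_mul_cancel₀ hnv]
    have hle := hmin hwsph
    have hveq : v = ‖v‖ • w := by
      rw [hw, smul_smul, mul_inv_cancel₀ hnv, one_smul]
    calc (u ⬝ᵥ Q.mulVec u) * ‖v‖ ^ 2 ≤ (w ⬝ᵥ Q.mulVec w) * ‖v‖ ^ 2 := by
          have := hle
          have h2 : (0:ℝ) ≤ ‖v‖ ^ 2 := sq_nonneg _
          exact mul_le_mul_of_nonneg_right this h2
      _ = (‖v‖⁻¹ ^ 2 * (v ⬝ᵥ Q.mulVec v)) * ‖v‖ ^ 2 := by rw [hw, quad_smul]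
      _ = v ⬝ᵥ Q.mulVec v := by
          field_simp

lemma abs_le_sq (t : ℤ) : |t| ≤ t ^ 2 := by nlinarith [abs_nonneg t, sq_abs t]

/-- The arithmetical minimum of a positive definite form exists. -/
lemma exists_min {d : ℕ} (hd : 0 < d) (Q : Matrix (Fin d) (Fin d) ℝ) (hQ : Q.PosDef) :
    ∃ lam : ℝ, IsLeast {r : ℝ | ∃ x : Fin d → ℤ, x ≠ 0 ∧ qeval Q x = r} lam := by
  obtain ⟨m, hm, hlow⟩ := exists_quad_lower hd Q hQ
  set y₁ : Fin d → ℤ := fun _ => 1 with hy₁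
  have hy₁0 : y₁ ≠ 0 := by
    intro h
    have := congrFun h ⟨0, hd⟩
    simp [hy₁] at this
  set C : ℝ := qeval Q y₁ with hC
  set N : ℤ := ⌈C / m⌉ with hN
  set T : Set (Fin d → ℤ) := {y | y ≠ 0 ∧ qeval Q y ≤ C} with hT
  have hTsub : T ⊆ {y : Fin d → ℤ | ∀ i, y i ∈ Set.Icc (-N) N} := by
    rintro y ⟨hy0, hyC⟩ i
    have h1 : m * ‖castVec y‖ ^ 2 ≤ C := le_trans (hlow (castVec y)) hyC
    have h2 : ‖castVec y‖ ^ 2 ≤ C / m := by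
      rw [le_div_iff₀ hm]; linarith
    have h3 : |(y i : ℝ)| ≤ ‖castVec y‖ := by
      have := norm_le_pi_norm (castVec y) i
      simpa [castVec] using this
    have h4 : ((y i : ℝ)) ^ 2 ≤ C / m := by
      calc ((y i : ℝ)) ^ 2 = |(y i : ℝ)| ^ 2 := (sq_abs _).symm
        _ ≤ ‖castVec y‖ ^ 2 := by
            exact pow_le_pow_left₀ (abs_nonneg _) h3 2
        _ ≤ C / m := h2
    have h5 : ((y i) ^ 2 : ℝ) ≤ (N : ℝ) := by
      push_cast
      exact le_trans h4 (Int.le_ceil _)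
    have h6 : (y i) ^ 2 ≤ N := by exact_mod_cast h5
    have h7 : |y i| ≤ N := le_trans (abs_le_sq _) h6
    rw [Set.mem_Icc]
    exact abs_le.mp h7
  have hTfin : T.Finite := by
    refine Set.Finite.subset ?_ hTsub
    have : {y : Fin d → ℤ | ∀ i, y i ∈ Set.Icc (-N) N}
        = Set.pi Set.univ (fun _ => Set.Icc (-N) N) := by
      ext y; simp [Set.mem_pi, Set.mem_Icc, Pi.le_def, forall_and]
    rw [this]
    exact Set.Finite.pi fun _ => Set.finite_Icc _ _
  have hTne : T.Nonempty := ⟨y₁, hy₁0, le_refl _⟩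
  obtain ⟨y₀, hy₀T, hy₀min⟩ := Set.exists_min_image T (qeval Q) hTfin hTne
  refine ⟨qeval Q y₀, ⟨y₀, hy₀T.1, rfl⟩, ?_⟩
  rintro r ⟨x, hx0, rfl⟩
  by_cases hxC : qeval Q x ≤ C
  · exact hy₀min x ⟨hx0, hxC⟩
  · exact le_trans (hy₀min y₁ ⟨hy₁0, le_refl _⟩) (le_of_not_ge hxC)
open Matrix

/-- A vector generating the unit ideal extends to a basis of `ℤ^(d+1)`. -/
lemma exists_basis_head {d : ℕ} (x₀ : Fin (d + 1) → ℤ)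
    (h1 : (1 : ℤ) ∈ Ideal.span (Set.range x₀)) :
    ∃ v : Module.Basis (Fin (d + 1)) ℤ (Fin (d + 1) → ℤ), v 0 = x₀ := by
  obtain ⟨c, hc⟩ := (Submodule.mem_span_range_iff_exists_fun ℤ).mp h1
  let F : (Fin (d + 1) → ℤ) →ₗ[ℤ] ℤ :=
    { toFun := fun x => ∑ i, c i * x i
      map_add' := by
        intro x y
        simp [mul_add, Finset.sum_add_distrib]
      map_smul' := by
        intro r x
        simp [Finset.mul_sum, mul_comm, mul_left_comm] }
  have hF : F x₀ = 1 := by simpa [F] using hc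
  set K := LinearMap.ker F with hK
  have : Module.Finite ℤ K := inferInstance
  have : Module.Free ℤ K := inferInstance
  let bK : Module.Basis (Fin (Module.finrank ℤ K)) ℤ K := Module.finBasis ℤ K
  have hli : ∀ (c : ℤ), ∀ x ∈ K, c • x₀ + x = 0 → c = 0 := by
    intro a x hx hax
    have h := congrArg F hax
    rw [map_add, _root_.map_smul, hF, LinearMap.mem_ker.mp hx, map_zero] at h
    simpa using h
  have hsp : ∀ z : Fin (d + 1) → ℤ, ∃ a : ℤ, z + a • x₀ ∈ K := by
    intro z
    refine ⟨-(F z), ?_⟩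
    rw [LinearMap.mem_ker, map_add, _root_.map_smul, hF]
    simp
  let v' : Module.Basis (Fin (Module.finrank ℤ K + 1)) ℤ (Fin (d + 1) → ℤ) :=
    Module.Basis.mkFinCons x₀ bK hli hsp
  have hcard : Module.finrank ℤ K + 1 = d + 1 := by
    have h1 := Module.finrank_eq_card_basis v'
    have h2 : Module.finrank ℤ (Fin (d + 1) → ℤ) = d + 1 := by
      simp [Module.finrank_pi]
    rw [h2] at h1
    simpa using h1.symm
  refine ⟨v'.reindex (finCongr hcard), ?_⟩
  have h0 : (finCongr hcard).symm (0 : Fin (d + 1)) = 0 := by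
    ext; simp
  rw [Module.Basis.reindex_apply, h0]
  have := congrFun (Module.Basis.coe_mkFinCons x₀ bK hli hsp) 0
  simpa [v'] using this
open Matrix

/-- Schur complement of the (0,0) entry. -/
noncomputable def schur {m : ℕ} (R : Matrix (Fin (m + 1)) (Fin (m + 1)) ℝ) :
    Matrix (Fin m) (Fin m) ℝ :=
  Matrix.of fun i j => R i.succ j.succ - R 0 i.succ * R 0 j.succ / R 0 0

lemma quad_split {m : ℕ} (R : Matrix (Fin (m + 1)) (Fin (m + 1)) ℝ)
    (hsym : ∀ i j, R i j = R j i) (ha : R 0 0 ≠ 0) (z : Fin (m + 1) → ℝ) :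
    z ⬝ᵥ R.mulVec z
      = R 0 0 * (z 0 + (∑ j : Fin m, R 0 j.succ * z j.succ) / R 0 0) ^ 2
        + (fun i : Fin m => z i.succ) ⬝ᵥ (schur R).mulVec (fun i => z i.succ) := by
  set a := R 0 0 with haa
  set T := ∑ j : Fin m, R 0 j.succ * z j.succ with hT
  have hL : z ⬝ᵥ R.mulVec z
      = z 0 * (a * z 0) + z 0 * T + (∑ i : Fin m, z i.succ * (R i.succ 0 * z 0))
        + ∑ i : Fin m, z i.succ * ∑ j : Fin m, R i.succ j.succ * z j.succ := by
    have hL1 : ∑ x : Fin m, z x.succ * (R x.succ 0 * z 0 + ∑ j : Fin m, R x.succ j.succ * z j.succ)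
        = (∑ x : Fin m, z x.succ * (R x.succ 0 * z 0))
          + ∑ x : Fin m, z x.succ * ∑ j : Fin m, R x.succ j.succ * z j.succ := by
      rw [← Finset.sum_add_distrib]
      exact Finset.sum_congr rfl fun i _ => mul_add _ _ _
    simp only [dotProduct, mulVec, Fin.sum_univ_succ]
    rw [hL1, hT]
    ring
  have hU : (∑ i : Fin m, z i.succ * (R i.succ 0 * z 0)) = T * z 0 := by
    rw [hT, Finset.sum_mul]
    apply Finset.sum_congr rfl
    intro i _
    rw [hsym i.succ 0]
    ring
  have hS : (fun i : Fin m => z i.succ) ⬝ᵥ (schur R).mulVec (fun i => z i.succ)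
      = (∑ i : Fin m, z i.succ * ∑ j : Fin m, R i.succ j.succ * z j.succ) - T * T / a := by
    simp only [dotProduct, mulVec, schur, Matrix.of_apply]
    have hinner : ∀ i : Fin m,
        (∑ j : Fin m, (R i.succ j.succ - R 0 i.succ * R 0 j.succ / a) * z j.succ)
          = (∑ j : Fin m, R i.succ j.succ * z j.succ) - R 0 i.succ / a * T := by
      intro i
      rw [hT, Finset.mul_sum, ← Finset.sum_sub_distrib]
      apply Finset.sum_congr rfl
      intro j _
      ring
    calc (∑ i : Fin m, z i.succ * ∑ j : Fin m, (R i.succ j.succ - R 0 i.succ * R 0 j.succ / a) * z j.succ)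
        = ∑ i : Fin m, (z i.succ * ∑ j : Fin m, R i.succ j.succ * z j.succ
            - R 0 i.succ * z i.succ * (T / a)) := by
          apply Finset.sum_congr rfl
          intro i _
          rw [hinner i]
          ring
      _ = (∑ i : Fin m, z i.succ * ∑ j : Fin m, R i.succ j.succ * z j.succ)
            - (∑ i : Fin m, R 0 i.succ * z i.succ) * (T / a) := by
          rw [Finset.sum_sub_distrib, Finset.sum_mul]
      _ = (∑ i : Fin m, z i.succ * ∑ j : Fin m, R i.succ j.succ * z j.succ) - T * T / a := by
          rw [← hT]
          ring
  rw [hL, hU, hS]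
  field_simp
  ring

def consEquiv (m : ℕ) : Fin 1 ⊕ Fin m ≃ Fin (m + 1) where
  toFun := Sum.elim (fun _ => 0) Fin.succ
  invFun := fun i => Fin.cases (Sum.inl 0) Sum.inr i
  left_inv := by
    rintro (x | j)
    · simp [Fin.fin_one_eq_zero x]
    · simp
  right_inv := by
    intro i
    induction i using Fin.cases <;> simp

lemma det_schur {m : ℕ} (R : Matrix (Fin (m + 1)) (Fin (m + 1)) ℝ)
    (hsym : ∀ i j, R i j = R j i) (ha : R 0 0 ≠ 0) :
    R.det = R 0 0 * (schur R).det := by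
  classical
  set A : Matrix (Fin 1) (Fin 1) ℝ := Matrix.diagonal (fun _ => R 0 0) with hA
  have hAdet : A.det = R 0 0 := by simp [hA]
  haveI : Invertible A := A.invertibleOfIsUnitDet (by rw [hAdet]; exact (isUnit_iff_ne_zero.mpr ha))
  set B : Matrix (Fin 1) (Fin m) ℝ := Matrix.of fun _ j => R 0 j.succ with hB
  set C : Matrix (Fin m) (Fin 1) ℝ := Matrix.of fun i _ => R i.succ 0 with hC
  set D : Matrix (Fin m) (Fin m) ℝ := Matrix.of fun i j => R i.succ j.succ with hD
  have hsub : R.submatrix (consEquiv m) (consEquiv m) = Matrix.fromBlocks A B C D := by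
    ext i j
    rcases i with i | i <;> rcases j with j | j <;>
      simp [consEquiv, fromBlocks, hA, hB, hC, hD, Matrix.diagonal,
        Fin.fin_one_eq_zero]
  have hdet1 : R.det = (Matrix.fromBlocks A B C D).det := by
    rw [← hsub, Matrix.det_submatrix_equiv_self]
  have hinv : (⅟A : Matrix (Fin 1) (Fin 1) ℝ) = Matrix.diagonal (fun _ => (R 0 0)⁻¹) := by
    apply invOf_eq_right_inv
    ext i j
    simp [hA, Matrix.mul_apply, Matrix.diagonal, Matrix.one_apply, Fin.fin_one_eq_zero i, Fin.fin_one_eq_zero j,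
      mul_inv_cancel₀ ha]
  have hschur : D - C * ⅟A * B = schur R := by
    ext i j
    simp [hD, hC, hB, hinv, Matrix.mul_apply, Matrix.diagonal, schur, Fin.sum_univ_one]
    rw [hsym i.succ 0]
    ring
  rw [hdet1, Matrix.det_fromBlocks₁₁, hAdet, hschur]

lemma conj_dot {d : ℕ} (M B : Matrix (Fin d) (Fin d) ℝ) (c : Fin d → ℝ) :
    (B.mulVec c) ⬝ᵥ M.mulVec (B.mulVec c) = c ⬝ᵥ (Bᵀ * M * B).mulVec c := by
  rw [Matrix.dotProduct_mulVec c (Bᵀ * M * B), ← Matrix.vecMul_vecMul, ← Matrix.vecMul_vecMul,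
    Matrix.vecMul_transpose, ← Matrix.dotProduct_mulVec, ← Matrix.dotProduct_mulVec]

lemma castVec_mulVec {d : ℕ} (B : Matrix (Fin d) (Fin d) ℤ) (y : Fin d → ℤ) :
    castVec (B.mulVec y) = (B.map ((↑) : ℤ → ℝ)).mulVec (castVec y) := by
  funext i
  simp [castVec, Matrix.mulVec, dotProduct]

lemma qeval_conj {d : ℕ} (Q : Matrix (Fin d) (Fin d) ℝ) (B : Matrix (Fin d) (Fin d) ℤ)
    (y : Fin d → ℤ) :
    qeval ((B.map ((↑) : ℤ → ℝ))ᵀ * Q * B.map ((↑) : ℤ → ℝ)) y = qeval Q (B.mulVec y) := by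
  rw [qeval, qeval, castVec_mulVec, conj_dot]

lemma prim_of_min {d : ℕ} {Q : Matrix (Fin d) (Fin d) ℝ} (hQ : Q.PosDef) {lam : ℝ}
    (hlam : IsLeast {r : ℝ | ∃ x : Fin d → ℤ, x ≠ 0 ∧ qeval Q x = r} lam) {x₀ : Fin d → ℤ}
    (hx₀ : x₀ ≠ 0) (hval : qeval Q x₀ = lam) :
    (1 : ℤ) ∈ Ideal.span (Set.range x₀) := by
  have hlampos : 0 < lam := hval ▸ qeval_pos hQ hx₀
  set I := Ideal.span (Set.range x₀) with hI
  obtain ⟨g, hg⟩ := (IsPrincipalIdealRing.principal I).principal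
  have hdvd : ∀ i, g ∣ x₀ i := by
    intro i
    have hmem : x₀ i ∈ I := Ideal.subset_span ⟨i, rfl⟩
    rw [hg] at hmem
    exact Ideal.mem_span_singleton.mp hmem
  have hgne : g ≠ 0 := by
    intro h
    apply hx₀
    funext i
    have := hdvd i
    rw [h, zero_dvd_iff] at this
    simpa using this
  set y : Fin d → ℤ := fun i => x₀ i / g with hy
  have hxy : x₀ = g • y := by
    funext i
    simp only [hy, Pi.smul_apply, smul_eq_mul]
    exact (Int.mul_ediv_cancel' (hdvd i)).symm
  have hyne : y ≠ 0 := by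
    intro h
    apply hx₀
    rw [hxy, h, smul_zero]
  have hcast : castVec (g • y) = (g : ℝ) • castVec y := by
    funext i
    simp [castVec]
  have hq : qeval Q x₀ = (g : ℝ) ^ 2 * qeval Q y := by
    rw [hxy, qeval, hcast, quad_smul, qeval]
  have hle : lam ≤ qeval Q y := hlam.2 ⟨y, hyne, rfl⟩
  have habs : |g| = 1 := by
    by_contra hgabs
    have hk0 : |g| ≠ 0 := fun h => hgne (abs_eq_zero.mp h)
    have h2 : 2 ≤ |g| := by
      by_contra hcon
      push_neg at hcon
      have h1' : |g| ≤ 1 := Int.lt_add_one_iff.mp hcon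
      have h3 : |g| < 1 := lt_of_le_of_ne h1' hgabs
      have h4 : |g| ≤ 0 := Int.lt_add_one_iff.mp h3
      exact hk0 (le_antisymm h4 (abs_nonneg g))
    have h2r : (2 : ℝ) ≤ |(g : ℝ)| := by
      rw [← Int.cast_abs]
      exact_mod_cast h2
    have hg2 : (4 : ℝ) ≤ (g : ℝ) ^ 2 := by
      nlinarith [sq_abs (g : ℝ)]
    have : lam < qeval Q x₀ := by
      rw [hq]
      nlinarith
    rw [hval] at this
    exact lt_irrefl _ this
  have hunit : IsUnit g := Int.isUnit_iff_abs_eq.mpr habs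
  rw [hg]
  exact Ideal.mem_span_singleton.mpr (isUnit_iff_dvd_one.mp hunit)

lemma key (n : ℕ) : ∀ (Q : Matrix (Fin (n + 1)) (Fin (n + 1)) ℝ), Q.PosDef →
    ∀ lam : ℝ, IsLeast {r : ℝ | ∃ x : Fin (n + 1) → ℤ, x ≠ 0 ∧ qeval Q x = r} lam →
    lam ^ (n + 1) ≤ (4 / 3 : ℝ) ^ (n * (n + 1) / 2) * Q.det := by
  induction n with
  | zero =>
    intro Q hQ lam hlam
    have h1 : qeval Q (fun _ => 1) = Q 0 0 := by
      simp [qeval, castVec, Matrix.mulVec, dotProduct, Fin.sum_univ_one]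
    have hle : lam ≤ Q 0 0 := hlam.2 ⟨fun _ => 1, by
      intro h
      exact one_ne_zero (congrFun h 0), h1⟩
    simpa [Matrix.det_fin_one] using hle
  | succ n ih =>
    intro Q hQ lam hlam
    obtain ⟨⟨x₀, hx₀ne, hx₀val⟩, hlb⟩ := hlam
    have hlam' : IsLeast {r : ℝ | ∃ x : Fin (n + 2) → ℤ, x ≠ 0 ∧ qeval Q x = r} lam :=
      ⟨⟨x₀, hx₀ne, hx₀val⟩, hlb⟩
    have hlampos : 0 < lam := hx₀val ▸ qeval_pos hQ hx₀ne
    have h1 := prim_of_min hQ hlam' hx₀ne hx₀val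
    obtain ⟨v, hv0⟩ := exists_basis_head x₀ h1
    set B : Matrix (Fin (n + 2)) (Fin (n + 2)) ℤ := (Pi.basisFun ℤ (Fin (n + 2))).toMatrix v
      with hB
    haveI : Invertible B := (Pi.basisFun ℤ (Fin (n + 2))).invertibleToMatrix v
    have hBunit : IsUnit B.det := Matrix.isUnit_det_of_invertible B
    set Bℝ : Matrix (Fin (n + 2)) (Fin (n + 2)) ℝ := B.map ((↑) : ℤ → ℝ) with hBR
    set R : Matrix (Fin (n + 2)) (Fin (n + 2)) ℝ := Bℝᵀ * Q * Bℝ with hR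
    have hBij : ∀ i j, B i j = v j i := by
      intro i j
      rw [hB, Module.Basis.toMatrix_apply]
      simp
    have hBcol : B.mulVec (Pi.single 0 1) = x₀ := by
      rw [Matrix.mulVec_single_one]
      funext i
      change B i 0 = x₀ i
      rw [hBij, hv0]
    -- determinant of B over ℝ
    have hBdet : B.det = 1 ∨ B.det = -1 := Int.isUnit_iff.mp hBunit
    have hBRdet : Bℝ.det = (B.det : ℝ) := by
      rw [hBR]
      exact (RingHom.map_det (Int.castRingHom ℝ) B).symm
    have hBRdet2 : Bℝ.det ^ 2 = 1 := by
      rcases hBdet with h | h <;> rw [hBRdet, h] <;> norm_num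
    have hBRunit : IsUnit Bℝ.det := by
      apply isUnit_iff_ne_zero.mpr
      intro h
      rw [h] at hBRdet2
      norm_num at hBRdet2
    -- mulVec bijectivity
    have hBinj : ∀ y : Fin (n + 2) → ℤ, B.mulVec y = 0 → y = 0 := by
      intro y h
      have h2 : (B⁻¹ * B).mulVec y = B⁻¹.mulVec 0 := by
        rw [← Matrix.mulVec_mulVec, h]
      rw [Matrix.nonsing_inv_mul B hBunit, Matrix.one_mulVec, Matrix.mulVec_zero] at h2
      exact h2
    have hBsurj : ∀ x : Fin (n + 2) → ℤ, ∃ y, B.mulVec y = x := by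
      intro x
      refine ⟨B⁻¹.mulVec x, ?_⟩
      rw [Matrix.mulVec_mulVec, Matrix.mul_nonsing_inv B hBunit, Matrix.one_mulVec]
    have hBRinj : ∀ c : Fin (n + 2) → ℝ, Bℝ.mulVec c = 0 → c = 0 := by
      intro c h
      have h2 : (Bℝ⁻¹ * Bℝ).mulVec c = Bℝ⁻¹.mulVec 0 := by
        rw [← Matrix.mulVec_mulVec, h]
      rw [Matrix.nonsing_inv_mul Bℝ hBRunit, Matrix.one_mulVec, Matrix.mulVec_zero] at h2
      exact h2
    -- the sets of represented values agree
    have hsetR : {r : ℝ | ∃ y : Fin (n + 2) → ℤ, y ≠ 0 ∧ qeval R y = r}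
        = {r : ℝ | ∃ x : Fin (n + 2) → ℤ, x ≠ 0 ∧ qeval Q x = r} := by
      ext r
      constructor
      · rintro ⟨y, hy, rfl⟩
        refine ⟨B.mulVec y, fun h => hy (hBinj y h), ?_⟩
        rw [← qeval_conj, ← hBR, ← hR]
      · rintro ⟨x, hx, rfl⟩
        obtain ⟨y, hy⟩ := hBsurj x
        refine ⟨y, ?_, ?_⟩
        · intro h
          apply hx
          rw [← hy, h, Matrix.mulVec_zero]
        · rw [hR, hBR, qeval_conj, hy]
    have hlamR : IsLeast {r : ℝ | ∃ y : Fin (n + 2) → ℤ, y ≠ 0 ∧ qeval R y = r} lam := by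
      rw [hsetR]
      exact hlam'
    -- symmetry of R
    have hQsymm : Qᵀ = Q := by
      have := hQ.1
      rwa [Matrix.IsHermitian, Matrix.conjTranspose_eq_transpose_of_trivial] at this
    have hRsymmM : Rᵀ = R := by
      rw [hR, Matrix.transpose_mul, Matrix.transpose_mul, Matrix.transpose_transpose, hQsymm,
        Matrix.mul_assoc]
    have hRsymm : ∀ i j, R i j = R j i := by
      intro i j
      have h := congrFun (congrFun hRsymmM j) i
      rwa [Matrix.transpose_apply] at h
    -- positivity of quadratic form of R
    have hRquad : ∀ c : Fin (n + 2) → ℝ, c ≠ 0 → 0 < c ⬝ᵥ R.mulVec c := by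
      intro c hc
      rw [hR, ← conj_dot]
      have hBc : Bℝ.mulVec c ≠ 0 := fun h => hc (hBRinj c h)
      have := hQ.dotProduct_mulVec_pos hBc
      simpa using this
    have hR00 : R 0 0 = lam := by
      have h1 : qeval R (Pi.single 0 1) = R 0 0 := by
        have hcast : castVec (Pi.single (0 : Fin (n + 2)) (1 : ℤ))
            = Pi.single (0 : Fin (n + 2)) (1 : ℝ) := by
          funext i
          rcases eq_or_ne i 0 with rfl | hi
          · simp [castVec]
          · simp [castVec, Pi.single_apply, hi]
        rw [qeval, hcast, Matrix.mulVec_single_one]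
        simp [dotProduct, Pi.single_apply]
      rw [← h1, hR, hBR, qeval_conj, hBcol, hx₀val]
    have hane : R 0 0 ≠ 0 := by rw [hR00]; exact ne_of_gt hlampos
    -- the Schur complement is positive definite
    set S : Matrix (Fin (n + 1)) (Fin (n + 1)) ℝ := schur R with hS
    have hSsymm : ∀ i j, S i j = S j i := by
      intro i j
      simp only [hS, schur, Matrix.of_apply]
      rw [hRsymm i.succ j.succ]
      ring
    have hStail : ∀ w : Fin (n + 1) → ℝ, ∀ z0 : ℝ,
        (fun i : Fin (n + 1) => (Fin.cons z0 w : Fin (n + 2) → ℝ) i.succ) = w := by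
      intro w z0
      funext i
      simp
    have hSquad : ∀ w : Fin (n + 1) → ℝ, w ≠ 0 → 0 < w ⬝ᵥ S.mulVec w := by
      intro w hw
      set z : Fin (n + 2) → ℝ :=
        Fin.cons (-(∑ j : Fin (n + 1), R 0 j.succ * w j) / R 0 0) w with hz
      have hzne : z ≠ 0 := by
        intro h
        apply hw
        funext i
        have := congrFun h i.succ
        simpa [hz] using this
      have hsplit := quad_split R hRsymm hane z
      have hz0 : z 0 = -(∑ j : Fin (n + 1), R 0 j.succ * w j) / R 0 0 := rfl
      have hzt : (fun i : Fin (n + 1) => z i.succ) = w := hStail w _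
      rw [hzt] at hsplit
      have hzsq : z 0 + (∑ j : Fin (n + 1), R 0 j.succ * z j.succ) / R 0 0 = 0 := by
        have : (∑ j : Fin (n + 1), R 0 j.succ * z j.succ)
            = ∑ j : Fin (n + 1), R 0 j.succ * w j := by
          apply Finset.sum_congr rfl
          intro j _
          rw [show z j.succ = w j from congrFun hzt j]
        rw [this, hz0]
        field_simp
        ring
      rw [hzsq] at hsplit
      simp only [ne_eq, OfNat.ofNat_ne_zero, not_false_eq_true, zero_pow, mul_zero, zero_add]
        at hsplit
      rw [← hS] at hsplit
      rw [← hsplit]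
      exact hRquad z hzne
    have hSpos : S.PosDef := by
      refine Matrix.PosDef.of_dotProduct_mulVec_pos ?_ ?_
      · rw [Matrix.IsHermitian, Matrix.conjTranspose_eq_transpose_of_trivial]
        ext i j
        rw [Matrix.transpose_apply]
        exact hSsymm j i
      · intro w hw
        have := hSquad w hw
        simpa using this
    obtain ⟨μ, hμ⟩ := exists_min n.succ_pos S hSpos
    have hμpos : 0 < μ := by
      obtain ⟨y', hy', hval'⟩ := hμ.1
      exact hval' ▸ qeval_pos hSpos hy'
    have ihS := ih S hSpos μ hμ
    -- λ ≤ λ/4 + μ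
    obtain ⟨y', hy'ne, hy'val⟩ := hμ.1
    set t : ℝ := (∑ j : Fin (n + 1), R 0 j.succ * castVec y' j) / R 0 0 with ht
    set y₀ : ℤ := -round t with hy₀
    set z : Fin (n + 2) → ℤ := Fin.cons y₀ y' with hz
    have hzne : z ≠ 0 := by
      intro h
      apply hy'ne
      funext i
      have := congrFun h i.succ
      simpa [hz] using this
    have hcastz : castVec z = Fin.cons ((y₀ : ℝ)) (castVec y') := by
      funext i
      induction i using Fin.cases with
      | zero => simp [castVec, hz]
      | succ j => simp [castVec, hz]
    have hsplit := quad_split R hRsymm hane (castVec z)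
    have hzt : (fun i : Fin (n + 1) => castVec z i.succ) = castVec y' := by
      rw [hcastz]
      exact hStail (castVec y') _
    have hz0 : castVec z 0 = (y₀ : ℝ) := by rw [hcastz]; simp
    rw [hzt, hz0] at hsplit
    have hTy : (∑ j : Fin (n + 1), R 0 j.succ * castVec z j.succ)
        = ∑ j : Fin (n + 1), R 0 j.succ * castVec y' j := by
      apply Finset.sum_congr rfl
      intro j _
      rw [show castVec z j.succ = castVec y' j from congrFun hzt j]
    rw [hTy] at hsplit
    have habs : |(y₀ : ℝ) + t| ≤ 1 / 2 := by
      rw [hy₀]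
      rw [Int.cast_neg, show -((round t : ℤ) : ℝ) + t = t - ((round t : ℤ) : ℝ) by ring]
      exact abs_sub_round t
    have hsq : ((y₀ : ℝ) + t) ^ 2 ≤ 1 / 4 := by
      nlinarith [sq_abs ((y₀ : ℝ) + t), abs_nonneg ((y₀ : ℝ) + t), habs]
    have hlamz : lam ≤ qeval R z := hlamR.2 ⟨z, hzne, rfl⟩
    have hqRz : qeval R z = R 0 0 * ((y₀ : ℝ) + t) ^ 2 + qeval S y' := by
      rw [qeval, hsplit, ht, ← hS, qeval]
    have hkey : lam ≤ lam / 4 + μ := by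
      have h1 : R 0 0 * ((y₀ : ℝ) + t) ^ 2 ≤ lam / 4 := by
        rw [hR00]
        nlinarith [hsq, hlampos.le, sq_nonneg ((y₀ : ℝ) + t)]
      rw [hqRz, hy'val] at hlamz
      rw [hR00] at hlamz h1
      linarith
    have h34 : 3 / 4 * lam ≤ μ := by linarith
    -- determinants
    have hdetR : R.det = Q.det := by
      rw [hR, Matrix.det_mul, Matrix.det_mul, Matrix.det_transpose]
      have : Bℝ.det * Q.det * Bℝ.det = Bℝ.det ^ 2 * Q.det := by ring
      rw [this, hBRdet2, one_mul]
    have hdetS : S.det = Q.det / lam := by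
      have h := det_schur R hRsymm hane
      rw [hR00, hdetR] at h
      rw [← hS] at h
      field_simp at h ⊢
      linarith [h]
    -- final arithmetic
    have hpow1 : (3 / 4 * lam) ^ (n + 1) ≤ μ ^ (n + 1) :=
      pow_le_pow_left₀ (by positivity) h34 (n + 1)
    have hpow2 : lam ^ (n + 1) ≤ (4 / 3 : ℝ) ^ (n + 1) * μ ^ (n + 1) := by
      have hmp : (3 / 4 * lam) ^ (n + 1) = (3 / 4 : ℝ) ^ (n + 1) * lam ^ (n + 1) := mul_pow _ _ _
      have hinv : (4 / 3 : ℝ) ^ (n + 1) * (3 / 4 : ℝ) ^ (n + 1) = 1 := by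
        rw [← mul_pow]
        norm_num
      calc lam ^ (n + 1) = (4 / 3 : ℝ) ^ (n + 1) * ((3 / 4 : ℝ) ^ (n + 1) * lam ^ (n + 1)) := by
            rw [← mul_assoc, hinv, one_mul]
        _ ≤ (4 / 3 : ℝ) ^ (n + 1) * μ ^ (n + 1) := by
            rw [← hmp]
            exact mul_le_mul_of_nonneg_left hpow1 (by positivity)
    have hexp : (n + 1) * (n + 2) / 2 = (n + 1) + n * (n + 1) / 2 := by
      have h : (n + 1) * (n + 2) = n * (n + 1) + (n + 1) * 2 := by ring
      rw [h, Nat.add_mul_div_right _ _ (by norm_num)]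
      omega
    calc lam ^ (n + 1 + 1) = lam * lam ^ (n + 1) := by ring
      _ ≤ lam * ((4 / 3 : ℝ) ^ (n + 1) * μ ^ (n + 1)) :=
          mul_le_mul_of_nonneg_left hpow2 (le_of_lt hlampos)
      _ ≤ lam * ((4 / 3 : ℝ) ^ (n + 1) * ((4 / 3 : ℝ) ^ (n * (n + 1) / 2) * S.det)) := by
          apply mul_le_mul_of_nonneg_left _ (le_of_lt hlampos)
          exact mul_le_mul_of_nonneg_left ihS (by positivity)
      _ = (4 / 3 : ℝ) ^ ((n + 1) * (n + 2) / 2) * (lam * S.det) := by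
          rw [hexp, pow_add]
          ring
      _ = (4 / 3 : ℝ) ^ ((n + 1) * (n + 2) / 2) * Q.det := by
          rw [hdetS]
          field_simp

/-- Hermite's theorem: for every positive definite quadratic form `Q` in `d ≥ 1`
variables with arithmetical minimum `lam`, one has
`lam ≤ (det Q)^(1/d) * (4/3)^((d-1)/2)`. -/
theorem stmt0 (d : ℕ) (hd : 1 ≤ d) (Q : Matrix (Fin d) (Fin d) ℝ) (hQ : Q.PosDef)
    (lam : ℝ)
    (hlam : IsLeast {r : ℝ | ∃ x : Fin d → ℤ, x ≠ 0 ∧ qeval Q x = r} lam) :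
    lam ≤ Q.det ^ ((1 : ℝ) / d) * (4 / 3 : ℝ) ^ (((d : ℝ) - 1) / 2) := by
  obtain ⟨n, rfl⟩ : ∃ n, d = n + 1 := ⟨d - 1, (Nat.succ_pred_eq_of_pos hd).symm⟩
  have hkey := key n Q hQ lam hlam
  obtain ⟨x, hxne, hxval⟩ := hlam.1
  have hlampos : 0 < lam := hxval ▸ qeval_pos hQ hxne
  have hdet : 0 < Q.det := hQ.det_pos
  set k : ℕ := n * (n + 1) / 2 with hk
  have hc : (0 : ℝ) < 4 / 3 := by norm_num
  have hkcast : (k : ℝ) = (n : ℝ) * ((n : ℝ) + 1) / 2 := by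
    have h2 : 2 ∣ n * (n + 1) := (Nat.even_mul_succ_self n).two_dvd
    rw [hk, Nat.cast_div h2 (by norm_num)]
    push_cast
    ring
  have hne : ((n : ℝ) + 1) ≠ 0 := by positivity
  have h1 : lam = (lam ^ (n + 1) : ℝ) ^ ((1 : ℝ) / ((n : ℝ) + 1)) := by
    rw [← Real.rpow_natCast lam (n + 1), ← Real.rpow_mul hlampos.le]
    rw [show ((n + 1 : ℕ) : ℝ) * ((1 : ℝ) / ((n : ℝ) + 1)) = 1 by push_cast; field_simp]
    exact (Real.rpow_one lam).symm
  have h2 : (lam ^ (n + 1) : ℝ) ^ ((1 : ℝ) / ((n : ℝ) + 1))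
      ≤ ((4 / 3 : ℝ) ^ k * Q.det) ^ ((1 : ℝ) / ((n : ℝ) + 1)) :=
    Real.rpow_le_rpow (by positivity) hkey (by positivity)
  have h3 : ((4 / 3 : ℝ) ^ k * Q.det) ^ ((1 : ℝ) / ((n : ℝ) + 1))
      = Q.det ^ ((1 : ℝ) / ((n : ℝ) + 1)) * (4 / 3 : ℝ) ^ ((n : ℝ) / 2) := by
    rw [Real.mul_rpow (by positivity) hdet.le]
    rw [← Real.rpow_natCast (4 / 3 : ℝ) k, ← Real.rpow_mul hc.le]
    rw [show (k : ℝ) * ((1 : ℝ) / ((n : ℝ) + 1)) = (n : ℝ) / 2 by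
      rw [hkcast]; field_simp]
    ring
  have hfin : lam ≤ Q.det ^ ((1 : ℝ) / ((n : ℝ) + 1)) * (4 / 3 : ℝ) ^ ((n : ℝ) / 2) := by
    calc lam = (lam ^ (n + 1) : ℝ) ^ ((1 : ℝ) / ((n : ℝ) + 1)) := h1
      _ ≤ ((4 / 3 : ℝ) ^ k * Q.det) ^ ((1 : ℝ) / ((n : ℝ) + 1)) := h2
      _ = Q.det ^ ((1 : ℝ) / ((n : ℝ) + 1)) * (4 / 3 : ℝ) ^ ((n : ℝ) / 2) := h3
  have hcast1 : ((n + 1 : ℕ) : ℝ) = (n : ℝ) + 1 := by push_cast; ring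
  rw [hcast1, show ((n : ℝ) + 1 - 1) / 2 = (n : ℝ) / 2 by ring]
  exact hfin
end

section
/- For every d ≥ 1 and every constant C > 0 there exists m = m(d, C) such that: for every positive definite quadratic form Q in d variables with λ(Q) ≥ 1 and trace Q ≤ C, every x ∈ ℤ^d with Q[x] ≤ 1 satisfies max_{i=1,…,d} |x_i| ≤ m. Equivalently, the set of x ∈ ℤ^d \ {0} for which Q[x] ≤ 1 for some such Q is finite. -/
set_option maxHeartbeats 1000000

open Matrix

open scoped MatrixOrder in
lemma qnorm_setup {d : ℕ} (Q : Matrix (Fin d) (Fin d) ℝ) (hQ : Q.PosSemidef) :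
    ∃ u : (Fin d → ℝ) →ₗ[ℝ] EuclideanSpace ℝ (Fin d),
      ∀ v, ‖u v‖ ^ 2 = v ⬝ᵥ Q.mulVec v := by
  refine ⟨(WithLp.linearEquiv 2 ℝ (Fin d → ℝ)).symm.toLinearMap ∘ₗ (CFC.sqrt Q).mulVecLin, ?_⟩
  intro v
  have hA : (CFC.sqrt Q) * (CFC.sqrt Q) = Q := CFC.sqrt_mul_sqrt_self Q hQ.nonneg
  have ht : (CFC.sqrt Q)ᵀ = (CFC.sqrt Q) := by
    have := (CFC.sqrt_nonneg Q).posSemidef.isHermitian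
    simpa [Matrix.IsHermitian, Matrix.conjTranspose_eq_transpose_of_trivial] using this
  have hsym : v ᵥ* (CFC.sqrt Q) = (CFC.sqrt Q) *ᵥ v := by
    conv_lhs => rw [← ht]
    rw [vecMul_transpose]
  have h1 : v ⬝ᵥ Q.mulVec v = ((CFC.sqrt Q) *ᵥ v) ⬝ᵥ ((CFC.sqrt Q) *ᵥ v) := by
    have : v ⬝ᵥ ((CFC.sqrt Q) * (CFC.sqrt Q)) *ᵥ v = ((CFC.sqrt Q) *ᵥ v) ⬝ᵥ ((CFC.sqrt Q) *ᵥ v) := by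
      rw [← mulVec_mulVec, dotProduct_mulVec, hsym]
    rw [← this, hA]
  rw [h1, EuclideanSpace.norm_eq, Real.sq_sqrt (by positivity)]
  simp [dotProduct, sq_abs, pow_two]

lemma qnorm_small {d : ℕ} {Q : Matrix (Fin d) (Fin d) ℝ}
    {u : (Fin d → ℝ) →ₗ[ℝ] EuclideanSpace ℝ (Fin d)}
    (hu : ∀ v, ‖u v‖ ^ 2 = v ⬝ᵥ Q.mulVec v) {C B : ℝ} (hC : 0 ≤ C) (hB : 0 ≤ B)
    (hdiag : ∀ i, Q i i ≤ C) (w : Fin d → ℝ) (hw : ∀ i, |w i| ≤ B) :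
    ‖u w‖ ≤ d * B * Real.sqrt C := by
  have hsingle : ∀ i, ‖u (Pi.single i 1)‖ ≤ Real.sqrt C := by
    intro i
    have h1 : ‖u (Pi.single i 1)‖ ^ 2 = Q i i := by
      rw [hu]
      simp [dotProduct, mulVec, Pi.single_apply]
    have : ‖u (Pi.single i 1)‖ ^ 2 ≤ C := h1 ▸ hdiag i
    nlinarith [Real.sq_sqrt hC, Real.sqrt_nonneg C, norm_nonneg (u (Pi.single i 1))]
  have hw' : w = ∑ i, w i • (Pi.single i 1 : Fin d → ℝ) := by
    have h := Finset.univ_sum_single w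
    rw [← h]
    congr 1
    funext i
    ext j
    by_cases h : j = i <;> simp [Pi.single_apply, h]
  calc ‖u w‖ = ‖∑ i, w i • u (Pi.single i 1)‖ := by
        conv_lhs => rw [hw']
        rw [map_sum]
        simp
    _ ≤ ∑ i : Fin d, ‖w i • u (Pi.single i 1)‖ := norm_sum_le _ _
    _ ≤ ∑ i : Fin d, B * Real.sqrt C := by
        apply Finset.sum_le_sum
        intro i _
        rw [norm_smul]
        exact mul_le_mul (by simpa using hw i) (hsingle i) (norm_nonneg _) hB
    _ = d * B * Real.sqrt C := by simp [Finset.sum_const, mul_assoc]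

lemma collision (n a b : ℤ) (K : ℕ) (hn : 0 < n)
    (heq : a * K / n = b * K / n) : |a - b| * K < n := by
  have hla := Int.mul_ediv_add_emod (a * K) n
  have hlb := Int.mul_ediv_add_emod (b * K) n
  have hra0 := Int.emod_nonneg (a * K) hn.ne'
  have hra := Int.emod_lt_of_pos (a * K) hn
  have hrb0 := Int.emod_nonneg (b * K) hn.ne'
  have hrb := Int.emod_lt_of_pos (b * K) hn
  have hK0 : (0:ℤ) ≤ (K:ℤ) := Int.natCast_nonneg K
  have key : (a - b) * K = a * K % n - b * K % n := by
    rw [heq] at hla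
    linarith [hla, hlb]
  have : |a - b| * K = |(a - b) * K| := by
    rw [abs_mul, abs_of_nonneg hK0]
  rw [this, abs_lt]
  constructor <;> nlinarith [key]

lemma key_s4 (d : ℕ) (hd : 1 ≤ d) (C : ℝ) (hC : 0 < C) :
    ∃ m : ℝ, 0 ≤ m ∧ ∀ Q : Matrix (Fin d) (Fin d) ℝ, Q.PosDef →
      (∀ y : Fin d → ℤ, y ≠ 0 → 1 ≤ qeval Q y) → Q.trace ≤ C →
      ∀ x : Fin d → ℤ, qeval Q x ≤ 1 → ∀ i, |(x i : ℝ)| ≤ m := by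
  set K : ℕ := ⌈4 * d * Real.sqrt C⌉₊ + 1 with hKdef
  have hKpos : 0 < K := Nat.succ_pos _
  have hKreal : 4 * d * Real.sqrt C + 1 ≤ (K : ℝ) := by
    have := Nat.le_ceil (4 * d * Real.sqrt C)
    rw [hKdef]
    push_cast
    linarith
  refine ⟨((2 * K ^ d : ℕ) : ℝ), by positivity, ?_⟩
  intro Q hQ hmin htr x hx i0
  by_contra hcon
  push_neg at hcon
  -- n = |x i0|
  set n : ℤ := |x i0| with hndef
  have hnN : (2 * K ^ d : ℤ) < n := by
    have : ((2 * K ^ d : ℕ) : ℝ) < |(x i0 : ℝ)| := hcon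
    rw [← Int.cast_abs] at this
    exact_mod_cast this
  have hn0 : (0:ℤ) < n := lt_of_le_of_lt (by positivity) hnN
  have hnR : (0:ℝ) < (n:ℝ) := by exact_mod_cast hn0
  -- diagonal bounds
  have hsingleQ : ∀ j, qeval Q (Pi.single j 1) = Q j j := by
    intro j
    simp [qeval, castVec, dotProduct, mulVec, Pi.single_apply]
  have hdiag1 : ∀ j, (1:ℝ) ≤ Q j j := by
    intro j
    rw [← hsingleQ j]
    exact hmin _ (fun h => by simpa using congrFun h j)
  have hdiagC : ∀ i, Q i i ≤ C := by
    intro i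
    have : Q i i ≤ Q.trace := by
      rw [Matrix.trace]
      exact Finset.single_le_sum (f := fun j => Q.diag j)
        (fun j _ => le_trans zero_le_one (hdiag1 j)) (Finset.mem_univ i)
    linarith
  obtain ⟨u, hu⟩ := qnorm_setup Q hQ.posSemidef
  have hx1 : ‖u (castVec x)‖ ≤ 1 := by
    have h : ‖u (castVec x)‖ ^ 2 ≤ 1 := by rw [hu]; exact hx
    nlinarith [norm_nonneg (u (castVec x))]
  -- pigeonhole
  have hbucket : ∀ (k : ℕ) (i : Fin d), ((((k:ℤ) * x i) % n) * K / n).toNat < K := by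
    intro k i
    have ht0 : 0 ≤ ((k:ℤ) * x i) % n := Int.emod_nonneg _ hn0.ne'
    have ht : ((k:ℤ) * x i) % n < n := Int.emod_lt_of_pos _ hn0
    have h1 : 0 ≤ (((k:ℤ) * x i) % n) * K / n := Int.ediv_nonneg (by positivity) hn0.le
    have h2 : (((k:ℤ) * x i) % n) * K / n < K := by
      rw [Int.ediv_lt_iff_lt_mul hn0]
      have hKZ : (0:ℤ) < (K:ℤ) := by exact_mod_cast hKpos
      nlinarith
    omega
  set f : ℕ → (Fin d → Fin K) := fun k i => ⟨((((k:ℤ) * x i) % n) * K / n).toNat, hbucket k i⟩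
    with hfdef
  obtain ⟨a, ha, b, hb, hab, hfab⟩ :=
    Finset.exists_ne_map_eq_of_card_lt_of_maps_to
      (s := Finset.range (K ^ d + 1)) (t := Finset.univ) (f := f)
      (by simp [Fintype.card_fun]) (fun a _ => Finset.mem_univ _)
  -- wlog a < b
  wlog hab' : a < b generalizing a b
  · exact this b hb a ha hab.symm hfab.symm (by omega)
  rw [Finset.mem_range] at ha hb
  -- definitions
  set e : ℕ → Fin d → ℤ := fun k i => ((k:ℤ) * x i) % n with hedef
  set y : ℕ → Fin d → ℤ := fun k i => ((k:ℤ) * x i) / n with hydef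
  have hed : ∀ i, |e b i - e a i| * K < n := by
    intro i
    apply collision _ _ _ _ hn0
    have heq := congrFun hfab i
    rw [hfdef] at heq
    simp only [Fin.mk.injEq] at heq
    have h0a : 0 ≤ (((a:ℤ) * x i) % n) * K / n := Int.ediv_nonneg (by
      have := Int.emod_nonneg ((a:ℤ) * x i) hn0.ne'
      positivity) hn0.le
    have h0b : 0 ≤ (((b:ℤ) * x i) % n) * K / n := Int.ediv_nonneg (by
      have := Int.emod_nonneg ((b:ℤ) * x i) hn0.ne'
      positivity) hn0.le
    show (((b:ℤ) * x i) % n) * K / n = (((a:ℤ) * x i) % n) * K / n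
    omega
  set s : ℕ := b - a with hsdef
  have hs1 : 1 ≤ s := by omega
  have hs2 : s ≤ K ^ d := by omega
  set z : Fin d → ℤ := fun i => y b i - y a i with hzdef
  have hz : ∀ i, (n:ℤ) * z i = (s:ℤ) * x i - (e b i - e a i) := by
    intro i
    have h1 := Int.mul_ediv_add_emod ((b:ℤ) * x i) n
    have h2 := Int.mul_ediv_add_emod ((a:ℤ) * x i) n
    have hsc : (s:ℤ) = (b:ℤ) - (a:ℤ) := by
      rw [hsdef]; push_cast [Nat.cast_sub hab'.le]; ring
    simp only [hzdef, hydef, hedef, hsc]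
    ring_nf
    ring_nf at h1 h2
    nlinarith [h1, h2]
  -- real decomposition
  set E : Fin d → ℝ := fun i => ((e b i - e a i : ℤ) : ℝ) with hEdef
  have hKR : (0:ℝ) < (K:ℝ) := by exact_mod_cast hKpos
  have hE : ∀ i, |E i| ≤ (n:ℝ) / K := by
    intro i
    have h := hed i
    have hR : |E i| * K < (n:ℝ) := by
      have : ((|e b i - e a i| * K : ℤ) : ℝ) < ((n:ℤ):ℝ) := by exact_mod_cast h
      simpa [hEdef, abs_sub_comm, Int.cast_abs] using this
    rw [le_div_iff₀ hKR]
    linarith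
  have hdecomp : castVec z = ((s:ℝ)/(n:ℝ)) • castVec x + (-(1:ℝ)/(n:ℝ)) • E := by
    funext i
    have hzR : (n:ℝ) * ((z i : ℤ) : ℝ) = (s:ℝ) * ((x i : ℤ) : ℝ) - E i := by
      have := hz i
      push_cast [hEdef]
      exact_mod_cast congrArg (fun t : ℤ => (t : ℝ)) this
    simp only [castVec, Pi.add_apply, Pi.smul_apply, smul_eq_mul]
    field_simp
    linarith
  have hEnorm : ‖u E‖ ≤ d * ((n:ℝ)/K) * Real.sqrt C :=
    qnorm_small hu hC.le (by positivity) hdiagC E hE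
  have hsR : (0:ℝ) ≤ (s:ℝ) := Nat.cast_nonneg s
  have hznorm : ‖u (castVec z)‖ ≤ (s:ℝ)/(n:ℝ) + (1/(n:ℝ)) * (d * ((n:ℝ)/K) * Real.sqrt C) := by
    rw [hdecomp, map_add, LinearMap.map_smul, LinearMap.map_smul]
    calc ‖((s:ℝ)/(n:ℝ)) • u (castVec x) + (-(1:ℝ)/(n:ℝ)) • u E‖
        ≤ ‖((s:ℝ)/(n:ℝ)) • u (castVec x)‖ + ‖(-(1:ℝ)/(n:ℝ)) • u E‖ := norm_add_le _ _
      _ = ((s:ℝ)/(n:ℝ)) * ‖u (castVec x)‖ + (1/(n:ℝ)) * ‖u E‖ := by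
          rw [norm_smul, norm_smul]
          congr 1
          · congr 1
            rw [Real.norm_eq_abs, abs_of_nonneg (by positivity)]
          · congr 1
            rw [Real.norm_eq_abs, abs_div, abs_neg, abs_one, abs_of_nonneg hnR.le]
      _ ≤ (s:ℝ)/(n:ℝ) * 1 + (1/(n:ℝ)) * (d * ((n:ℝ)/K) * Real.sqrt C) := by
          gcongr
      _ = (s:ℝ)/(n:ℝ) + (1/(n:ℝ)) * (d * ((n:ℝ)/K) * Real.sqrt C) := by ring
  have hK1R : (1:ℝ) ≤ (K:ℝ) := by exact_mod_cast hKpos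
  have hKd1 : (1:ℝ) ≤ (K:ℝ) ^ d := one_le_pow₀ hK1R
  have hnbig : (2:ℝ) * (K:ℝ) ^ d < (n:ℝ) := by exact_mod_cast hnN
  have hA1 : (s:ℝ)/(n:ℝ) < 1/2 := by
    rw [div_lt_iff₀ hnR]
    have hsK : (s:ℝ) ≤ (K:ℝ) ^ d := by exact_mod_cast hs2
    nlinarith
  have hA2 : (1/(n:ℝ)) * (d * ((n:ℝ)/K) * Real.sqrt C) ≤ 1/4 := by
    have heq : (1/(n:ℝ)) * (d * ((n:ℝ)/K) * Real.sqrt C) = d * Real.sqrt C / K := by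
      field_simp
    rw [heq, div_le_iff₀ hKR]
    linarith [Real.sqrt_nonneg C, hKreal]
  have hzlt : ‖u (castVec z)‖ < 1 := by linarith
  have hqz : qeval Q z < 1 := by
    have h : ‖u (castVec z)‖ ^ 2 = qeval Q z := hu (castVec z)
    nlinarith [norm_nonneg (u (castVec z))]
  have hz0 : z = 0 := by
    by_contra h
    exact absurd (hmin z h) (by linarith)
  -- final contradiction
  have h1 : (s:ℤ) * x i0 = e b i0 - e a i0 := by
    have h := hz i0
    rw [hz0] at h
    simp at h
    linarith
  have h2 : n ≤ |(s:ℤ) * x i0| := by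
    rw [abs_mul, abs_of_nonneg (Int.natCast_nonneg s)]
    have hs1' : (1:ℤ) ≤ (s:ℤ) := by exact_mod_cast hs1
    nlinarith [hn0]
  have h3 : |e b i0 - e a i0| < n := by
    have := hed i0
    have hK1 : (1:ℤ) ≤ (K:ℤ) := by exact_mod_cast hKpos
    nlinarith [abs_nonneg (e b i0 - e a i0)]
  rw [h1] at h2
  linarith

/-- For every `d ≥ 1` and `C > 0` there is a bound `m` such that every
positive definite quadratic form `Q` with arithmetical minimum at least `1` and
trace at most `C` has all integral vectors `x` with `Q[x] ≤ 1` bounded in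
absolute coordinates by `m`; equivalently, the set of nonzero integral vectors
`x` with `Q[x] ≤ 1` for some such `Q` is finite. -/
theorem stmt4 (d : ℕ) (hd : 1 ≤ d) (C : ℝ) (hC : 0 < C) :
    (∃ m : ℝ, ∀ Q : Matrix (Fin d) (Fin d) ℝ, Q.PosDef →
      (∀ y : Fin d → ℤ, y ≠ 0 → 1 ≤ qeval Q y) → Q.trace ≤ C →
      ∀ x : Fin d → ℤ, qeval Q x ≤ 1 → ∀ i, |(x i : ℝ)| ≤ m) ∧
    {x : Fin d → ℤ | x ≠ 0 ∧ ∃ Q : Matrix (Fin d) (Fin d) ℝ, Q.PosDef ∧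
      (∀ y : Fin d → ℤ, y ≠ 0 → 1 ≤ qeval Q y) ∧ Q.trace ≤ C ∧ qeval Q x ≤ 1}.Finite := by
  obtain ⟨m, hm0, hm⟩ := key_s4 d hd C hC
  refine ⟨⟨m, hm⟩, ?_⟩
  apply Set.Finite.subset (Set.finite_Icc (fun _ : Fin d => -⌈m⌉) (fun _ => ⌈m⌉))
  rintro x ⟨hx0, Q, hQ, hmin, htr, hqx⟩
  have hb := hm Q hQ hmin htr x hqx
  rw [Set.mem_Icc]
  constructor <;> (intro i)
  · have h := abs_le.mp (hb i)
    have h2 : ((-⌈m⌉ : ℤ) : ℝ) ≤ ((x i : ℤ) : ℝ) := by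
      push_cast
      linarith [Int.le_ceil m]
    exact_mod_cast h2
  · have h := abs_le.mp (hb i)
    have h2 : ((x i : ℤ) : ℝ) ≤ ((⌈m⌉ : ℤ) : ℝ) := le_trans h.2 (Int.le_ceil m)
    exact_mod_cast h2
end

section
/- For every d ≥ 1 and every constant C > 0, the set {Q ∈ S^d_{>0} : λ(Q) ≥ 1 and trace Q ≤ C} is a polytope, i.e., it equals the convex hull of a finite set of real symmetric d×d matrices (possibly empty). -/
set_option maxHeartbeats 4000000


open Matrix

/-- Dirichlet simultaneous approximation via pigeonhole. -/
lemma dirichlet_approx {d : ℕ} (N : ℕ) (hN : 0 < N) (u : Fin d → ℝ) :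
    ∃ (q : ℕ) (x : Fin d → ℤ), 1 ≤ q ∧ q ≤ N ^ d ∧
      ∀ i, |(q : ℝ) * u i - (x i : ℝ)| ≤ 1 / N := by
  classical
  set g : ℕ → Fin d → ℤ := fun q i => ⌊(N : ℝ) * Int.fract ((q : ℝ) * u i)⌋ with hg
  have hmaps : ∀ q ∈ Finset.range (N ^ d + 1), g q ∈
      Fintype.piFinset (fun _ : Fin d => Finset.Icc (0 : ℤ) (N - 1)) := by
    intro q _
    rw [Fintype.mem_piFinset]
    intro i
    rw [Finset.mem_Icc]
    have hNpos : (0 : ℝ) < N := by exact_mod_cast hN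
    refine ⟨Int.floor_nonneg.2 (mul_nonneg hNpos.le (Int.fract_nonneg _)), ?_⟩
    have h1 : (N : ℝ) * Int.fract ((q : ℝ) * u i) < ((N : ℤ) : ℝ) := by
      push_cast
      nlinarith [Int.fract_lt_one ((q : ℝ) * u i), Int.fract_nonneg ((q : ℝ) * u i)]
    have h2 := Int.floor_lt.2 h1
    simp only [hg]
    omega
  have hcard : (Fintype.piFinset (fun _ : Fin d => Finset.Icc (0 : ℤ) (N - 1))).card
      < (Finset.range (N ^ d + 1)).card := by
    rw [Fintype.card_piFinset, Finset.card_range]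
    have : ∀ _i : Fin d, (Finset.Icc (0 : ℤ) (N - 1)).card = N := by
      intro i
      rw [Int.card_Icc]
      omega
    rw [Finset.prod_congr rfl (fun i _ => this i), Finset.prod_const, Finset.card_univ,
      Fintype.card_fin]
    omega
  obtain ⟨q1, hq1, q2, hq2, hne, heq⟩ :=
    Finset.exists_ne_map_eq_of_card_lt_of_maps_to hcard hmaps
  -- wlog q1 < q2
  wlog hlt : q1 < q2 generalizing q1 q2
  · exact this q2 hq2 q1 hq1 hne.symm heq.symm (by omega)
  refine ⟨q2 - q1, fun i => ⌊(q2 : ℝ) * u i⌋ - ⌊(q1 : ℝ) * u i⌋, by omega,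
    by simp only [Finset.mem_range] at hq2; omega, ?_⟩
  intro i
  have hfloor : ⌊(N : ℝ) * Int.fract ((q1 : ℝ) * u i)⌋ = ⌊(N : ℝ) * Int.fract ((q2 : ℝ) * u i)⌋ :=
    congrFun heq i
  have habs : |(N : ℝ) * Int.fract ((q1 : ℝ) * u i) - (N : ℝ) * Int.fract ((q2 : ℝ) * u i)| < 1 :=
    Int.abs_sub_lt_one_of_floor_eq_floor hfloor
  have hNpos : (0 : ℝ) < N := by exact_mod_cast hN
  have key : ((q2 - q1 : ℕ) : ℝ) * u i - ((⌊(q2 : ℝ) * u i⌋ - ⌊(q1 : ℝ) * u i⌋ : ℤ) : ℝ)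
      = Int.fract ((q2 : ℝ) * u i) - Int.fract ((q1 : ℝ) * u i) := by
    rw [Int.fract, Int.fract]
    push_cast [Nat.cast_sub hlt.le]
    ring
  rw [key, le_div_iff₀ hNpos]
  have heq2 : |Int.fract ((q2:ℝ) * u i) - Int.fract ((q1:ℝ) * u i)| * N
      = |(N:ℝ) * Int.fract ((q2:ℝ) * u i) - (N:ℝ) * Int.fract ((q1:ℝ) * u i)| := by
    rw [show (N:ℝ) * Int.fract ((q2:ℝ) * u i) - (N:ℝ) * Int.fract ((q1:ℝ) * u i)
        = (Int.fract ((q2:ℝ) * u i) - Int.fract ((q1:ℝ) * u i)) * N by ring,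
      abs_mul, abs_of_pos hNpos]
  rw [heq2]
  rw [abs_sub_comm] at habs
  linarith


lemma quad_expand {d : ℕ} {A : Matrix (Fin d) (Fin d) ℝ} (hA : A.IsHermitian)
    (v : Fin d → ℝ) :
    v ⬝ᵥ A *ᵥ v = ∑ i, hA.eigenvalues i * ((star (hA.eigenvectorUnitary : Matrix (Fin d) (Fin d) ℝ) *ᵥ v) i)^2 ∧
    v ⬝ᵥ v = ∑ i, ((star (hA.eigenvectorUnitary : Matrix (Fin d) (Fin d) ℝ) *ᵥ v) i)^2 := by
  classical
  set U : Matrix (Fin d) (Fin d) ℝ := (hA.eigenvectorUnitary : Matrix (Fin d) (Fin d) ℝ) with hU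
  set y : Fin d → ℝ := star U *ᵥ v with hy
  have hUU : U * star U = 1 := (Matrix.mem_unitaryGroup_iff).mp hA.eigenvectorUnitary.2
  have hstar : star U = Uᵀ := by
    ext i j; simp [Matrix.star_apply]
  have hvec : v ᵥ* U = y := by
    rw [hy, hstar, ← Matrix.mulVec_transpose]
  have h2 : v ⬝ᵥ v = y ⬝ᵥ y := by
    have e1 : y ⬝ᵥ y = (y ᵥ* star U) ⬝ᵥ v := by
      conv_lhs => rw [hy, Matrix.dotProduct_mulVec]
    have e2 : y ᵥ* star U = (U * star U) *ᵥ v := by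
      rw [hy, hstar, Matrix.vecMul_transpose, Matrix.mulVec_mulVec]
    rw [e1, e2, hUU, Matrix.one_mulVec]
  refine ⟨?_, ?_⟩
  · conv_lhs => rw [hA.spectral_theorem, Unitary.conjStarAlgAut_apply]
    rw [← Matrix.mulVec_mulVec, ← Matrix.mulVec_mulVec, Matrix.dotProduct_mulVec v U _, hvec]
    have : Matrix.diagonal (RCLike.ofReal ∘ hA.eigenvalues) *ᵥ y
        = fun i => hA.eigenvalues i * y i := by
      ext i
      simp [Matrix.mulVec_diagonal]
    rw [this]
    simp only [dotProduct]
    exact Finset.sum_congr rfl (fun i _ => by ring)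
  · rw [h2]
    simp only [dotProduct]
    exact Finset.sum_congr rfl (fun i _ => by ring)

lemma quad_eigen_lower {d : ℕ} {A : Matrix (Fin d) (Fin d) ℝ} (hA : A.IsHermitian)
    {c : ℝ} (hc : ∀ i, c ≤ hA.eigenvalues i) (v : Fin d → ℝ) :
    c * (v ⬝ᵥ v) ≤ v ⬝ᵥ A *ᵥ v := by
  obtain ⟨h1, h2⟩ := quad_expand hA v
  rw [h1, h2, Finset.mul_sum]
  exact Finset.sum_le_sum fun i _ => mul_le_mul_of_nonneg_right (hc i) (sq_nonneg _)

lemma exists_min_eigenvector {d : ℕ} (hd : 1 ≤ d) {A : Matrix (Fin d) (Fin d) ℝ}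
    (hA : A.IsHermitian) :
    ∃ (lam : ℝ) (u : Fin d → ℝ), (∀ v : Fin d → ℝ, lam * (v ⬝ᵥ v) ≤ v ⬝ᵥ A *ᵥ v) ∧
      u ⬝ᵥ u = 1 ∧ A *ᵥ u = lam • u ∧ (∀ i, |u i| ≤ 1) := by
  classical
  have hne : (Finset.univ : Finset (Fin d)).Nonempty := by
    refine ⟨⟨0, hd⟩, Finset.mem_univ _⟩
  obtain ⟨i0, _, hmin⟩ := Finset.exists_min_image Finset.univ hA.eigenvalues hne
  set u : Fin d → ℝ := ⇑(hA.eigenvectorBasis i0) with hu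
  have hnorm : ‖hA.eigenvectorBasis i0‖ = 1 := hA.eigenvectorBasis.orthonormal.1 i0
  have huu : u ⬝ᵥ u = 1 := by
    have h1 : (inner ℝ (hA.eigenvectorBasis i0) (hA.eigenvectorBasis i0) : ℝ) = 1 := by
      rw [real_inner_self_eq_norm_sq, hnorm]; norm_num
    rw [PiLp.inner_apply] at h1
    simp only [RCLike.inner_apply, starRingEnd_apply, star_trivial] at h1
    rw [← h1]
    rfl
  refine ⟨hA.eigenvalues i0, u, fun v => quad_eigen_lower hA (fun i => hmin i (Finset.mem_univ i)) v,
    huu, hA.mulVec_eigenvectorBasis i0, ?_⟩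
  intro i
  have h1 : u i ^ 2 ≤ ∑ j, u j ^ 2 := by
    refine Finset.single_le_sum (fun j _ => sq_nonneg (u j)) (Finset.mem_univ i)
  have h2 : ∑ j, u j ^ 2 = 1 := by
    rw [← huu]; simp only [dotProduct]; exact Finset.sum_congr rfl fun j _ => by ring
  nlinarith [sq_abs (u i), abs_nonneg (u i)]



lemma dot_abs_le {d : ℕ} {a b : Fin d → ℝ} {α β : ℝ}
    (ha : ∀ i, |a i| ≤ α) (hb : ∀ i, |b i| ≤ β) (hα : 0 ≤ α) :
    |a ⬝ᵥ b| ≤ d * α * β := by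
  calc |a ⬝ᵥ b| ≤ ∑ i, |a i * b i| := Finset.abs_sum_le_sum_abs _ _
    _ ≤ ∑ _i : Fin d, α * β := by
        refine Finset.sum_le_sum fun i _ => ?_
        rw [abs_mul]
        exact mul_le_mul (ha i) (hb i) (abs_nonneg _) hα
    _ = d * α * β := by simp [Finset.sum_const, mul_assoc]

lemma quad_abs_le {d : ℕ} {Q : Matrix (Fin d) (Fin d) ℝ} {C : ℝ}
    (hQC : ∀ i j, |Q i j| ≤ C) {a b : Fin d → ℝ} {α β : ℝ}
    (ha : ∀ i, |a i| ≤ α) (hb : ∀ i, |b i| ≤ β) (hα : 0 ≤ α) (hβ : 0 ≤ β) (hC : 0 ≤ C) :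
    |a ⬝ᵥ Q *ᵥ b| ≤ d^2 * C * α * β := by
  have hmv : ∀ i, |(Q *ᵥ b) i| ≤ d * C * β := by
    intro i
    calc |(Q *ᵥ b) i| = |∑ j, Q i j * b j| := rfl
      _ ≤ ∑ j, |Q i j * b j| := Finset.abs_sum_le_sum_abs _ _
      _ ≤ ∑ _j : Fin d, C * β := by
          refine Finset.sum_le_sum fun j _ => ?_
          rw [abs_mul]
          exact mul_le_mul (hQC i j) (hb j) (abs_nonneg _) hC
      _ = d * C * β := by simp [Finset.sum_const, mul_assoc]
  calc |a ⬝ᵥ Q *ᵥ b| ≤ d * α * (d * C * β) :=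
        dot_abs_le ha hmv hα
    _ = d^2 * C * α * β := by ring


lemma key_lower {d : ℕ} (hd : 1 ≤ d) {C : ℝ} (hC : 0 < C) {N : ℕ}
    (hN1 : (2 * d : ℝ) ≤ N) (hN2 : C * d ^ 2 / N ^ 2 ≤ 1 / 2)
    {Q : Matrix (Fin d) (Fin d) ℝ} (hsymm : Q.IsHermitian) (hQC : ∀ i j, |Q i j| ≤ C)
    (hX : ∀ x : Fin d → ℤ, x ≠ 0 → (∀ i, |(x i : ℝ)| ≤ 3 * (N : ℝ) ^ d) → 1 ≤ qeval Q x) :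
    ∀ v : Fin d → ℝ, (1 / (8 * (N : ℝ) ^ (2 * d))) * (v ⬝ᵥ v) ≤ v ⬝ᵥ Q *ᵥ v := by
  classical
  set μ : ℝ := 1 / (8 * (N : ℝ) ^ (2 * d)) with hμ
  have hdR : (1 : ℝ) ≤ d := by exact_mod_cast hd
  have hNR : (2 : ℝ) ≤ N := by nlinarith
  have hN0 : 0 < N := by
    by_contra h
    push_neg at h
    interval_cases N
    · norm_num at hNR
  have hNR0 : (0 : ℝ) < N := by exact_mod_cast hN0
  have hNd1 : (1 : ℝ) ≤ (N : ℝ) ^ d := one_le_pow₀ (by linarith)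
  have hNdpos : (0 : ℝ) < (N : ℝ) ^ d := by positivity
  have hμpos : 0 < μ := by rw [hμ]; positivity
  obtain ⟨lam, u, hquad, huu, heig, hub⟩ := exists_min_eigenvector hd hsymm
  -- It suffices to show μ ≤ lam
  suffices hml : μ ≤ lam by
    intro v
    have h0 : 0 ≤ v ⬝ᵥ v := by
      simp only [dotProduct]
      exact Finset.sum_nonneg fun i _ => mul_self_nonneg _
    calc μ * (v ⬝ᵥ v) ≤ lam * (v ⬝ᵥ v) := mul_le_mul_of_nonneg_right hml h0
      _ ≤ v ⬝ᵥ Q *ᵥ v := hquad v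
  by_contra hml
  push_neg at hml
  -- Dirichlet approximation of u
  obtain ⟨q, x, hq1, hqN, happrox⟩ := dirichlet_approx N hN0 u
  have hqR : (1 : ℝ) ≤ q := by exact_mod_cast hq1
  have hqNR : (q : ℝ) ≤ (N : ℝ) ^ d := by exact_mod_cast hqN
  set e : Fin d → ℝ := fun i => (x i : ℝ) - (q : ℝ) * u i with he
  have heb : ∀ i, |e i| ≤ 1 / N := by
    intro i
    rw [he]
    simpa [abs_sub_comm] using happrox i
  have hcast : castVec x = (q : ℝ) • u + e := by
    funext i
    simp [castVec, he]
  -- x ≠ 0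
  have hxne : x ≠ 0 := by
    intro h0
    have : ∀ i, |u i| ≤ 1 / N := by
      intro i
      have := happrox i
      rw [h0] at this
      simp only [Pi.zero_apply, Int.cast_zero, sub_zero, abs_mul, Nat.abs_cast] at this
      calc |u i| = 1 * |u i| := (one_mul _).symm
        _ ≤ (q : ℝ) * |u i| := by
            exact mul_le_mul_of_nonneg_right hqR (abs_nonneg _)
        _ ≤ 1 / N := this
    have hsum : u ⬝ᵥ u ≤ d * ((1:ℝ)/N) * (1/N) := by
      have := dot_abs_le this this (by positivity)
      calc u ⬝ᵥ u ≤ |u ⬝ᵥ u| := le_abs_self _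
        _ ≤ d * ((1:ℝ)/N) * (1/N) := this
    rw [huu] at hsum
    have : (d : ℝ) * (1/N) * (1/N) = d / N^2 := by ring
    rw [this] at hsum
    have hd2 : (d : ℝ) / N^2 < 1 := by
      rw [div_lt_one (by positivity)]
      nlinarith
    linarith
  -- |x i| ≤ 3 N^d
  have hxb : ∀ i, |(x i : ℝ)| ≤ 3 * (N : ℝ) ^ d := by
    intro i
    calc |(x i : ℝ)| = |(q : ℝ) * u i + e i| := by rw [he]; ring_nf
      _ ≤ |(q : ℝ) * u i| + |e i| := abs_add_le _ _
      _ ≤ (q : ℝ) * 1 + 1/N := by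
          refine add_le_add ?_ (heb i)
          rw [abs_mul, Nat.abs_cast]
          exact mul_le_mul_of_nonneg_left (hub i) (by positivity)
      _ ≤ (N:ℝ)^d + 1 := by
          have : (1:ℝ)/N ≤ 1 := by
            rw [div_le_one hNR0]; linarith
          linarith
      _ ≤ 3 * (N : ℝ) ^ d := by nlinarith
  have h1 : (1 : ℝ) ≤ qeval Q x := hX x hxne hxb
  -- expansion
  have hque : u ⬝ᵥ Q *ᵥ e = lam * (u ⬝ᵥ e) := by
    rw [Matrix.dotProduct_mulVec]
    have : u ᵥ* Q = Q *ᵥ u := by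
      nth_rewrite 1 [← hsymm]
      rw [Matrix.conjTranspose_eq_transpose_of_trivial, Matrix.vecMul_transpose]
    rw [this, heig]
    simp [smul_dotProduct, smul_eq_mul]
  have hqeu : e ⬝ᵥ Q *ᵥ u = lam * (u ⬝ᵥ e) := by
    rw [heig]
    simp [dotProduct_smul, smul_eq_mul, dotProduct_comm e u]
  have hquu : u ⬝ᵥ Q *ᵥ u = lam := by
    rw [heig]
    simp only [dotProduct_smul, smul_eq_mul, huu, mul_one]
  have hexpand : qeval Q x
      = lam * ((q:ℝ)^2 + 2*(q:ℝ)*(u ⬝ᵥ e)) + e ⬝ᵥ Q *ᵥ e := by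
    rw [qeval, hcast]
    rw [Matrix.mulVec_add, Matrix.mulVec_smul]
    rw [add_dotProduct, smul_dotProduct]
    rw [dotProduct_add, dotProduct_add]
    rw [dotProduct_smul, dotProduct_smul]
    rw [hquu, hque, hqeu]
    simp only [smul_eq_mul]
    ring
  -- estimates
  have hue : |u ⬝ᵥ e| ≤ d * (1/N) := by
    have := dot_abs_le hub heb (by norm_num)
    calc |u ⬝ᵥ e| ≤ d * 1 * (1/N) := this
      _ = d * (1/N) := by ring
  have hee : |e ⬝ᵥ Q *ᵥ e| ≤ C * d^2 / N^2 := by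
    have := quad_abs_le hQC heb heb (by positivity) (by positivity) hC.le
    calc |e ⬝ᵥ Q *ᵥ e| ≤ d^2 * C * (1/N) * (1/N) := this
      _ = C * d^2 / N^2 := by field_simp
  have hdN : (d : ℝ) * (1/N) ≤ 1/2 := by
    rw [mul_div_assoc']  -- d * 1 / N
    rw [div_le_div_iff₀ hNR0 (by norm_num)]
    nlinarith
  -- the inner factor
  have hfac0 : 0 ≤ (q:ℝ)^2 + 2*(q:ℝ)*(u ⬝ᵥ e) := by
    have e1 : -(d * (1/N)) ≤ u ⬝ᵥ e := neg_le_of_abs_le hue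
    have e2 : (q:ℝ) * (-(d * (1/N))) ≤ (q:ℝ) * (u ⬝ᵥ e) :=
      mul_le_mul_of_nonneg_left e1 (by positivity)
    have e3 : (q:ℝ) * ((d:ℝ) * (1/N)) ≤ (q:ℝ) * (1/2) :=
      mul_le_mul_of_nonneg_left hdN (by positivity)
    have e4 : (q:ℝ) ≤ (q:ℝ)^2 := by nlinarith [hqR]
    linarith
  have hfacU : (q:ℝ)^2 + 2*(q:ℝ)*(u ⬝ᵥ e) ≤ 3 * (N:ℝ)^(2*d) := by
    have h1 : u ⬝ᵥ e ≤ d * (1/N) := le_of_abs_le hue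
    have hq2 : (q:ℝ)^2 ≤ ((N:ℝ)^d)^2 := by nlinarith
    have hpow : ((N:ℝ)^d)^2 = (N:ℝ)^(2*d) := by
      rw [← pow_mul]; ring_nf
    have e3 : u ⬝ᵥ e ≤ 1/2 := le_trans h1 hdN
    have e4 : 2*(q:ℝ)*(u ⬝ᵥ e) ≤ (q:ℝ) := by nlinarith
    have e5 : (N:ℝ)^d ≤ (N:ℝ)^(2*d) := by
      calc (N:ℝ)^d ≤ ((N:ℝ)^d)^2 := by nlinarith [hNd1, hNdpos]
        _ = (N:ℝ)^(2*d) := hpow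
    rw [← hpow]
    linarith [hq2, hqNR, e4, e5, hNdpos, hpow ▸ e5]
  -- contradiction
  rcases le_or_gt lam 0 with hlam | hlam
  · have : qeval Q x ≤ C * d^2 / N^2 := by
      rw [hexpand]
      have h2 : lam * ((q:ℝ)^2 + 2*(q:ℝ)*(u ⬝ᵥ e)) ≤ 0 :=
        mul_nonpos_of_nonpos_of_nonneg hlam hfac0
      have h3 : e ⬝ᵥ Q *ᵥ e ≤ C * d^2 / N^2 := le_of_abs_le hee
      linarith
    linarith
  · have hterm : lam * ((q:ℝ)^2 + 2*(q:ℝ)*(u ⬝ᵥ e)) ≤ μ * (3 * (N:ℝ)^(2*d)) := by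
      calc lam * ((q:ℝ)^2 + 2*(q:ℝ)*(u ⬝ᵥ e)) ≤ lam * (3 * (N:ℝ)^(2*d)) :=
            mul_le_mul_of_nonneg_left hfacU hlam.le
        _ ≤ μ * (3 * (N:ℝ)^(2*d)) := by
            refine mul_le_mul_of_nonneg_right hml.le (by positivity)
    have hμ38 : μ * (3 * (N:ℝ)^(2*d)) = 3/8 := by
      rw [hμ]
      field_simp
    have h3 : e ⬝ᵥ Q *ᵥ e ≤ C * d^2 / N^2 := le_of_abs_le hee
    rw [hexpand] at h1
    rw [hμ38] at hterm
    linarith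


lemma finite_extremePoints_polyhedron {E : Type*} [AddCommGroup E] [Module ℝ E]
    {ι : Type*} [Fintype ι] (L : ι → E →ₗ[ℝ] ℝ) (b : ι → ℝ) :
    ({x : E | ∀ i, L i x ≤ b i}.extremePoints ℝ).Finite := by
  classical
  set S : Set E := {x : E | ∀ i, L i x ≤ b i} with hS
  set f : E → Finset ι := fun x => Finset.univ.filter (fun i => L i x = b i) with hf
  have hinj : Set.InjOn f (S.extremePoints ℝ) := by
    intro x hx y hy hxy
    by_contra hne
    rw [mem_extremePoints] at hx hy
    obtain ⟨hxS, hxext⟩ := hx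
    obtain ⟨hyS, _⟩ := hy
    -- choose t > 0 small
    set v : E := y - x with hv
    have hvne : v ≠ 0 := sub_ne_zero.2 (Ne.symm hne)
    have hactive : ∀ i, L i x = b i → L i v = 0 := by
      intro i hib
      have hiy : L i y = b i := by
        have h1 : i ∈ f x ↔ i ∈ f y := by rw [hxy]
        simp only [hf, Finset.mem_filter, Finset.mem_univ, true_and] at h1
        exact h1.1 hib
      simp [hv, map_sub, hiy, hib]
    -- inactive constraints
    obtain ⟨t, ht0, ht⟩ : ∃ t : ℝ, 0 < t ∧ ∀ i, L i x < b i → t * |L i v| ≤ b i - L i x := by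
      by_cases hne2 : (Finset.univ.filter (fun i => L i x < b i)).Nonempty
      · set m : ℝ := (Finset.univ.filter (fun i => L i x < b i)).inf'
          hne2 (fun i => (b i - L i x) / (|L i v| + 1)) with hm
        refine ⟨m, ?_, ?_⟩
        · rw [hm, Finset.lt_inf'_iff]
          intro i hi
          simp only [Finset.mem_filter, Finset.mem_univ, true_and] at hi
          exact div_pos (sub_pos.2 hi) (by positivity)
        · intro i hi
          have hmem : i ∈ Finset.univ.filter (fun j => L j x < b j) := by
            simp [hi]
          have h1 : m ≤ (b i - L i x) / (|L i v| + 1) := Finset.inf'_le _ hmem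
          have h2 : 0 < |L i v| + 1 := by positivity
          have h3 : m * |L i v| ≤ (b i - L i x) / (|L i v| + 1) * (|L i v| + 1) := by
            calc m * |L i v| ≤ (b i - L i x) / (|L i v| + 1) * |L i v| :=
                  mul_le_mul_of_nonneg_right h1 (abs_nonneg _)
              _ ≤ (b i - L i x) / (|L i v| + 1) * (|L i v| + 1) := by
                  refine mul_le_mul_of_nonneg_left (by linarith)
                    (div_nonneg (by linarith) (by positivity))
          rw [div_mul_cancel₀] at h3
          · exact h3
          · positivity
      · exact ⟨1, one_pos, fun i hi => (hne2 ⟨i, by simp [hi]⟩).elim⟩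
    have hmem : ∀ s : ℝ, |s| ≤ t → x + s • v ∈ S := by
      intro s hs i
      rcases eq_or_lt_of_le (hxS i) with heq | hlt
      · have h1 : L i (x + s • v) = L i x + s * L i v := by simp [map_add, _root_.map_smul]
        rw [h1, hactive i heq, heq]
        simp
      · have h1 : L i (x + s • v) = L i x + s * L i v := by simp [map_add, _root_.map_smul]
        have h2 : s * L i v ≤ |s * L i v| := le_abs_self _
        have h3 : |s * L i v| = |s| * |L i v| := abs_mul _ _
        have h4 : |s| * |L i v| ≤ t * |L i v| := mul_le_mul_of_nonneg_right hs (abs_nonneg _)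
        have h5 := ht i hlt
        rw [h1]
        linarith
    have hx1 : x + t • v ∈ S := hmem t (by rw [abs_of_pos ht0])
    have hx2 : x + (-t) • v ∈ S := hmem (-t) (by rw [abs_neg, abs_of_pos ht0])
    have hopen : x ∈ openSegment ℝ (x + t • v) (x + (-t) • v) := by
      refine ⟨1/2, 1/2, by norm_num, by norm_num, by norm_num, ?_⟩
      module
    have heq1 := (hxext _ hx1 _ hx2 hopen).1
    have h2 : t • v = 0 := by
      have h := congrArg (fun z => z - x) heq1
      simpa using h
    rcases smul_eq_zero.1 h2 with h | h
    · exact absurd h (ne_of_gt ht0)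
    · exact hvne h
  exact Set.Finite.of_finite_image (Set.toFinite _) hinj


instance matrixLocallyConvex (d : ℕ) : LocallyConvexSpace ℝ (Matrix (Fin d) (Fin d) ℝ) :=
  inferInstanceAs (LocallyConvexSpace ℝ (Fin d → Fin d → ℝ))

/-- `qeval` as a linear map in `Q`. -/
def qevalLM {d : ℕ} (x : Fin d → ℤ) : Matrix (Fin d) (Fin d) ℝ →ₗ[ℝ] ℝ where
  toFun Q := qeval Q x
  map_add' A B := by
    simp [qeval, Matrix.add_mulVec, dotProduct_add]
  map_smul' c A := by
    simp [qeval, Matrix.smul_mulVec, dotProduct_smul]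

/-- Entry difference as a linear map. -/
def entrySubLM {d : ℕ} (i j : Fin d) : Matrix (Fin d) (Fin d) ℝ →ₗ[ℝ] ℝ where
  toFun Q := Q i j - Q j i
  map_add' A B := by simp [Matrix.add_apply]; ring
  map_smul' c A := by simp [Matrix.smul_apply]; ring

lemma qeval_sum_form {d : ℕ} (Q : Matrix (Fin d) (Fin d) ℝ) (x : Fin d → ℤ) :
    qeval Q x = ∑ i, ∑ j, (x i : ℝ) * Q i j * (x j : ℝ) := by
  simp only [qeval, dotProduct, Matrix.mulVec, castVec, Finset.mul_sum]
  refine Finset.sum_congr rfl fun i _ => Finset.sum_congr rfl fun j _ => by ring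

lemma qeval_single {d : ℕ} (Q : Matrix (Fin d) (Fin d) ℝ) (i : Fin d) :
    qeval Q (Pi.single i 1) = Q i i := by
  rw [qeval_sum_form]
  rw [Finset.sum_eq_single i]
  · rw [Finset.sum_eq_single i]
    · simp
    · intro j _ hj; simp [Pi.single_apply, hj]
    · intro h; exact absurd (Finset.mem_univ i) h
  · intro k _ hk
    rw [Finset.sum_eq_zero]
    intro j _
    simp [Pi.single_apply, hk]
  · intro h; exact absurd (Finset.mem_univ i) h

lemma qeval_single_pair {d : ℕ} (Q : Matrix (Fin d) (Fin d) ℝ) (i j : Fin d)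
    (hij : i ≠ j) (ε : ℤ) :
    qeval Q (Pi.single i 1 + Pi.single j ε)
      = Q i i + ε * Q i j + ε * Q j i + ε^2 * Q j j := by
  rw [qeval_sum_form]
  have hx : ∀ k, ((Pi.single i 1 + Pi.single j ε : Fin d → ℤ) k : ℝ)
      = (if k = i then 1 else 0) + (if k = j then (ε:ℝ) else 0) := by
    intro k
    simp only [Pi.add_apply, Pi.single_apply, Int.cast_add,
      apply_ite (Int.cast : ℤ → ℝ), Int.cast_one, Int.cast_zero]
  simp only [hx]
  have key : ∀ f : Fin d → Fin d → ℝ,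
      ∑ k, ∑ l, ((if k = i then (1:ℝ) else 0) + (if k = j then (ε:ℝ) else 0)) * f k l *
        ((if l = i then (1:ℝ) else 0) + (if l = j then (ε:ℝ) else 0))
      = f i i + ε * f i j + ε * f j i + ε^2 * f j j := by
    intro f
    rw [Finset.sum_eq_add_of_mem i j (Finset.mem_univ i) (Finset.mem_univ j) hij ?_]
    · rw [Finset.sum_eq_add_of_mem i j (Finset.mem_univ i) (Finset.mem_univ j) hij ?_,
        Finset.sum_eq_add_of_mem i j (Finset.mem_univ i) (Finset.mem_univ j) hij ?_]
      · simp [hij, hij.symm]; ring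
      · intro k _ hk
        obtain ⟨h1, h2⟩ := hk
        simp [h1, h2]
      · intro k _ hk
        obtain ⟨h1, h2⟩ := hk
        simp [h1, h2]
    · intro k _ hk
      obtain ⟨h1, h2⟩ := hk
      rw [Finset.sum_eq_zero]
      intro l _
      simp [h1, h2]
  exact key (fun k l => Q k l)

/-- For every `d ≥ 1` and `C > 0`, the set of positive definite quadratic forms
with arithmetical minimum at least `1` and trace at most `C` is a polytope,
i.e. the convex hull of a finite set of symmetric matrices. -/
theorem stmt5 (d : ℕ) (hd : 1 ≤ d) (C : ℝ) (hC : 0 < C) :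
    ∃ F : Set (Matrix (Fin d) (Fin d) ℝ), F.Finite ∧
      {Q : Matrix (Fin d) (Fin d) ℝ | Q.PosDef ∧
          (∀ x : Fin d → ℤ, x ≠ 0 → 1 ≤ qeval Q x) ∧ Q.trace ≤ C}
        = convexHull ℝ F := by
  classical
  have hdR : (1:ℝ) ≤ (d:ℝ) := by exact_mod_cast hd
  set N : ℕ := 2 * d + 2 + ⌈2 * C * (d:ℝ) ^ 2⌉₊ with hNdef
  have hNnat : 2 * d + 2 ≤ N := by omega
  have hN1 : (2 * (d:ℝ)) ≤ (N:ℝ) := by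
    have h1 : ((2 * d : ℕ) : ℝ) ≤ (N : ℝ) := by exact_mod_cast (by omega : 2 * d ≤ N)
    push_cast at h1
    linarith
  have hNR1 : (1:ℝ) ≤ (N:ℝ) := by linarith
  have hNR0 : (0:ℝ) < (N:ℝ) := by linarith
  have hceil : 2 * C * (d:ℝ)^2 ≤ (N:ℝ) := by
    have h1 : (⌈2 * C * (d:ℝ) ^ 2⌉₊ : ℝ) ≤ (N:ℝ) := by
      exact_mod_cast (by omega : ⌈2 * C * (d:ℝ) ^ 2⌉₊ ≤ N)
    exact le_trans (Nat.le_ceil _) h1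
  have hN2 : C * (d:ℝ) ^ 2 / (N:ℝ) ^ 2 ≤ 1 / 2 := by
    rw [div_le_div_iff₀ (by positivity) (by norm_num)]
    have hNN : (N:ℝ) ≤ (N:ℝ)^2 := by nlinarith
    nlinarith
  have hNd1 : (1:ℝ) ≤ (N:ℝ)^d := one_le_pow₀ hNR1
  have hN2d : (0:ℝ) < (N:ℝ)^(2*d) := by positivity
  have hpowsq : ((N:ℝ)^d)^2 = (N:ℝ)^(2*d) := by rw [← pow_mul]; ring_nf
  set K : ℤ := 3 * (N:ℤ) ^ d with hKdef
  have hKcast : (K : ℝ) = 3 * (N:ℝ)^d := by rw [hKdef]; push_cast; ring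
  have hK1 : (1:ℤ) ≤ K := by
    have : (1:ℝ) ≤ (K:ℝ) := by rw [hKcast]; nlinarith
    exact_mod_cast this
  set Xf : Finset (Fin d → ℤ) :=
    (Fintype.piFinset fun _ : Fin d => Finset.Icc (-K) K).filter (fun x => x ≠ 0) with hXf
  have hXf_mem : ∀ x : Fin d → ℤ, x ∈ Xf ↔ (x ≠ 0 ∧ ∀ i, |x i| ≤ K) := by
    intro x
    rw [hXf, Finset.mem_filter, Fintype.mem_piFinset]
    constructor
    · rintro ⟨h1, h2⟩
      exact ⟨h2, fun i => abs_le.2 (Finset.mem_Icc.1 (h1 i))⟩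
    · rintro ⟨h1, h2⟩
      exact ⟨fun i => Finset.mem_Icc.2 (abs_le.1 (h2 i)), h1⟩
  -- The linear functionals
  set L : (↥Xf ⊕ ((Fin d × Fin d) ⊕ ((Fin d × Fin d) ⊕ Unit))) →
      (Matrix (Fin d) (Fin d) ℝ →ₗ[ℝ] ℝ) :=
    Sum.elim (fun x : ↥Xf => -(qevalLM (x : Fin d → ℤ)))
      (Sum.elim (fun p : Fin d × Fin d => entrySubLM p.1 p.2)
        (Sum.elim (fun p : Fin d × Fin d => -(entrySubLM p.1 p.2))
          (fun _ : Unit => Matrix.traceLinearMap (Fin d) ℝ ℝ))) with hL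
  set b : (↥Xf ⊕ ((Fin d × Fin d) ⊕ ((Fin d × Fin d) ⊕ Unit))) → ℝ :=
    Sum.elim (fun _ => -1)
      (Sum.elim (fun _ => 0) (Sum.elim (fun _ => 0) (fun _ => C))) with hb
  set P : Set (Matrix (Fin d) (Fin d) ℝ) := {Q | ∀ i, L i Q ≤ b i} with hP
  have hPmem : ∀ Q, Q ∈ P ↔
      ((∀ x ∈ Xf, 1 ≤ qeval Q x) ∧ (∀ i j, Q i j = Q j i) ∧ Q.trace ≤ C) := by
    intro Q
    constructor
    · intro h
      refine ⟨fun x hx => ?_, fun i j => ?_, ?_⟩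
      · have h1 := h (Sum.inl ⟨x, hx⟩)
        simp only [hL, hb, Sum.elim_inl, LinearMap.neg_apply, neg_le_neg_iff] at h1
        exact h1
      · have h1 := h (Sum.inr (Sum.inl (i, j)))
        have h2 := h (Sum.inr (Sum.inr (Sum.inl (i, j))))
        simp only [hL, hb, Sum.elim_inr, Sum.elim_inl, LinearMap.neg_apply, neg_le] at h1 h2
        simp only [entrySubLM, LinearMap.coe_mk, AddHom.coe_mk] at h1 h2
        linarith
      · have h1 := h (Sum.inr (Sum.inr (Sum.inr ())))
        simpa [hL, hb] using h1
    · rintro ⟨h1, h2, h3⟩ i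
      rcases i with x | (⟨i, j⟩ | (⟨i, j⟩ | u))
      · simp only [hL, hb, Sum.elim_inl, LinearMap.neg_apply, neg_le_neg_iff]
        exact h1 x x.2
      · simp only [hL, hb, Sum.elim_inr, Sum.elim_inl]
        simp [entrySubLM, h2 i j]
      · simp only [hL, hb, Sum.elim_inr, Sum.elim_inl, LinearMap.neg_apply, neg_le]
        simp [entrySubLM, h2 i j]
      · simpa [hL, hb] using h3
  -- entry bounds for members of P
  have hbound : ∀ Q ∈ P, (∀ i, 1 ≤ Q i i) ∧ (∀ i j, |Q i j| ≤ C) := by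
    intro Q hQ
    rw [hPmem] at hQ
    obtain ⟨hX, hsym, htr⟩ := hQ
    have hsingle_mem : ∀ i : Fin d, (Pi.single i 1 : Fin d → ℤ) ∈ Xf := by
      intro i
      rw [hXf_mem]
      constructor
      · intro h0
        have := congrFun h0 i
        simp at this
      · intro k
        rw [Pi.single_apply]
        split
        · simpa using hK1
        · simpa using le_trans zero_le_one hK1
    have hdiag : ∀ i, 1 ≤ Q i i := by
      intro i
      have := hX _ (hsingle_mem i)
      rwa [qeval_single] at this
    have hdiagC : ∀ i, Q i i ≤ C := by
      intro i
      have hsum : ((d:ℝ) - 1) ≤ ∑ k ∈ Finset.univ.erase i, Q k k := by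
        have hcard : (Finset.univ.erase i).card = d - 1 := by
          rw [Finset.card_erase_of_mem (Finset.mem_univ i), Finset.card_univ, Fintype.card_fin]
        have h1 : ∀ k ∈ Finset.univ.erase i, (1:ℝ) ≤ Q k k := fun k _ => hdiag k
        have h2 := Finset.card_nsmul_le_sum (Finset.univ.erase i) (fun k => Q k k) 1 h1
        rw [hcard] at h2
        simp only [nsmul_eq_mul, mul_one] at h2
        have : ((d - 1 : ℕ) : ℝ) = (d:ℝ) - 1 := by
          have : 1 ≤ d := hd
          push_cast [Nat.cast_sub this]
          ring
        rw [this] at h2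
        exact h2
      have htr0 : Q.trace = ∑ k, Q k k := rfl
      have hts : ∑ k, Q k k ≤ C := le_of_eq_of_le htr0.symm htr
      have htr' : Q i i + ∑ k ∈ Finset.univ.erase i, Q k k = ∑ k, Q k k :=
        Finset.add_sum_erase _ (fun k => Q k k) (Finset.mem_univ i)
      linarith
    have hCd : (1:ℝ) ≤ C := le_trans (hdiag ⟨0, hd⟩) (hdiagC ⟨0, hd⟩)
    refine ⟨hdiag, fun i j => ?_⟩
    rcases eq_or_ne i j with rfl | hij
    · rw [abs_le]
      constructor
      · linarith [hdiag i]
      · exact hdiagC i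
    · have hmem : ∀ ε : ℤ, ε = 1 ∨ ε = -1 →
          (Pi.single i 1 + Pi.single j ε : Fin d → ℤ) ∈ Xf := by
        intro ε hε
        rw [hXf_mem]
        constructor
        · intro h0
          have h4 := congrFun h0 i
          rw [Pi.add_apply, Pi.single_eq_same, Pi.single_eq_of_ne hij] at h4
          simp at h4
        · intro k
          rcases hε with rfl | rfl <;>
            simp only [Pi.add_apply, Pi.single_apply] <;>
            split_ifs <;>
            simp_all <;> omega
      have hp := hX _ (hmem 1 (Or.inl rfl))
      have hm := hX _ (hmem (-1) (Or.inr rfl))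
      rw [qeval_single_pair Q i j hij 1] at hp
      rw [qeval_single_pair Q i j hij (-1)] at hm
      push_cast at hp hm
      have hsy := hsym i j
      rw [abs_le]
      constructor
      · nlinarith [hdiagC i, hdiagC j]
      · nlinarith [hdiagC i, hdiagC j]
  -- P equals the target set
  have hSP : {Q : Matrix (Fin d) (Fin d) ℝ | Q.PosDef ∧
      (∀ x : Fin d → ℤ, x ≠ 0 → 1 ≤ qeval Q x) ∧ Q.trace ≤ C} = P := by
    ext Q
    simp only [Set.mem_setOf_eq]
    rw [hPmem]
    constructor
    · rintro ⟨hpd, hmin, htr⟩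
      refine ⟨fun x hx => hmin x ((hXf_mem x).1 hx).1, fun i j => ?_, htr⟩
      have h1 := congrFun (congrFun hpd.1 j) i
      simpa [Matrix.conjTranspose_apply] using h1
    · rintro ⟨hX, hsym, htr⟩
      have hherm : Q.IsHermitian := by
        show Qᴴ = Q
        ext i j
        simp [Matrix.conjTranspose_apply, hsym j i]
      obtain ⟨_, hQC⟩ := hbound Q (by rw [hPmem]; exact ⟨hX, hsym, htr⟩)
      have hX' : ∀ x : Fin d → ℤ, x ≠ 0 → (∀ i, |(x i : ℝ)| ≤ 3 * (N:ℝ)^d) →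
          1 ≤ qeval Q x := by
        intro x hx hb'
        refine hX x ((hXf_mem x).2 ⟨hx, fun i => ?_⟩)
        have := hb' i
        rw [← hKcast, ← Int.cast_abs] at this
        exact_mod_cast this
      have hkey := key_lower hd hC hN1 hN2 hherm hQC hX'
      have hpsd : ∀ v : Fin d → ℝ, v ≠ 0 → 0 < v ⬝ᵥ Q *ᵥ v := by
        intro v hv
        have h0 : 0 < v ⬝ᵥ v := by
          have hnn : 0 ≤ v ⬝ᵥ v := Finset.sum_nonneg fun k _ => mul_self_nonneg _
          rcases lt_or_eq_of_le hnn with h | h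
          · exact h
          · exact absurd (dotProduct_self_eq_zero.1 h.symm) hv
        calc (0:ℝ) < (1 / (8 * (N : ℝ) ^ (2 * d))) * (v ⬝ᵥ v) := by positivity
          _ ≤ v ⬝ᵥ Q *ᵥ v := hkey v
      refine ⟨⟨hherm, fun v hv => ?_⟩, fun x hx => ?_, htr⟩
      · exact (Matrix.posDef_iff_dotProduct_mulVec.mpr ⟨hherm, fun w hw => by simpa using hpsd w hw⟩).2 hv
      · by_cases hcase : ∀ i, |x i| ≤ K
        · exact hX x ((hXf_mem x).2 ⟨hx, hcase⟩)
        · push_neg at hcase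
          obtain ⟨i0, hi0⟩ := hcase
          have h1 : (3 * (N:ℝ)^d)^2 ≤ ((x i0 : ℝ))^2 := by
            have h2 : (K:ℝ) ≤ |(x i0 : ℝ)| := by
              rw [← Int.cast_abs]
              exact_mod_cast hi0.le
            rw [hKcast] at h2
            nlinarith [abs_nonneg ((x i0 : ℝ)), sq_abs ((x i0:ℝ))]
          have h2 : ((x i0 : ℝ))^2 ≤ castVec x ⬝ᵥ castVec x := by
            have : castVec x ⬝ᵥ castVec x = ∑ k, (castVec x k)^2 := by
              simp only [dotProduct]
              exact Finset.sum_congr rfl fun k _ => by ring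
            rw [this]
            exact Finset.single_le_sum (f := fun k => (castVec x k)^2)
              (fun k _ => sq_nonneg (castVec x k)) (Finset.mem_univ i0)
          have h3 := hkey (castVec x)
          have h4 : (9:ℝ) * (N:ℝ)^(2*d) ≤ castVec x ⬝ᵥ castVec x := by
            calc (9:ℝ) * (N:ℝ)^(2*d) = (3 * (N:ℝ)^d)^2 := by rw [← hpowsq]; ring
              _ ≤ ((x i0:ℝ))^2 := h1
              _ ≤ _ := h2
          have h5 : (1:ℝ) ≤ (1 / (8 * (N : ℝ) ^ (2 * d))) * (castVec x ⬝ᵥ castVec x) := by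
            rw [div_mul_eq_mul_div, le_div_iff₀ (by positivity)]
            linarith
          calc (1:ℝ) ≤ (1 / (8 * (N : ℝ) ^ (2 * d))) * (castVec x ⬝ᵥ castVec x) := h5
            _ ≤ castVec x ⬝ᵥ Q *ᵥ castVec x := h3
  -- P is convex, closed, compact
  have hPiInter : P = ⋂ i, {Q : Matrix (Fin d) (Fin d) ℝ | L i Q ≤ b i} := by
    ext Q
    simp [hP, Set.mem_iInter]
  have hconv : Convex ℝ P := by
    rw [hPiInter]
    exact convex_iInter fun i => convex_halfSpace_le (LinearMap.isLinear _) _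
  have hclosed : IsClosed P := by
    rw [hPiInter]
    refine isClosed_iInter fun i => ?_
    exact IsClosed.preimage (LinearMap.continuous_of_finiteDimensional (L i)) isClosed_Iic
  have hboxcompact : IsCompact {Q : Matrix (Fin d) (Fin d) ℝ | ∀ i j, Q i j ∈ Set.Icc (-C) C} := by
    have h1 : {Q : Matrix (Fin d) (Fin d) ℝ | ∀ i j, Q i j ∈ Set.Icc (-C) C}
        = Set.univ.pi (fun _ : Fin d => Set.univ.pi fun _ : Fin d => Set.Icc (-C) C) := by
      ext Q
      constructor
      · intro h i _ j _
        exact h i j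
      · intro h i j
        exact h i (Set.mem_univ i) j (Set.mem_univ j)
    rw [h1]
    exact isCompact_univ_pi fun i => isCompact_univ_pi fun j => isCompact_Icc
  have hsub : P ⊆ {Q : Matrix (Fin d) (Fin d) ℝ | ∀ i j, Q i j ∈ Set.Icc (-C) C} := by
    intro Q hQ i j
    have := (hbound Q hQ).2 i j
    rw [abs_le] at this
    exact ⟨this.1, this.2⟩
  have hcompact : IsCompact P := IsCompact.of_isClosed_subset hboxcompact hclosed hsub
  -- extreme points and Krein–Milman
  refine ⟨Set.extremePoints ℝ P, ?_, ?_⟩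
  · have := finite_extremePoints_polyhedron L b
    rwa [← hP] at this
  · rw [hSP]
    have hKM := closure_convexHull_extremePoints hcompact hconv
    have hcl : IsClosed (convexHull ℝ (Set.extremePoints ℝ P)) := by
      refine Set.Finite.isClosed_convexHull ℝ ?_
      have := finite_extremePoints_polyhedron L b
      rwa [← hP] at this
    rw [hcl.closure_eq] at hKM
    exact hKM.symm
end

section
/- For every d ≥ 1 there exist only finitely many perfect positive definite quadratic forms in d variables up to arithmetical equivalence and scaling: there are perfect forms Q_1, …, Q_n with λ(Q_i) = 1 such that every perfect form Q with λ(Q) = 1 satisfies Q = UᵗQ_iU for some i and some U ∈ GL_d(ℤ). -/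
open Matrix

/-- The real matrix corresponding to an integral matrix. -/
def castMat {d : ℕ} (U : Matrix (Fin d) (Fin d) ℤ) : Matrix (Fin d) (Fin d) ℝ :=
  U.map fun z => (z : ℝ)

/-- `Q` is a perfect positive definite quadratic form with arithmetical minimum
`lam`: it is positive definite, `lam` is the least value of `Q` on nonzero
integral vectors, and `Q` is the unique symmetric matrix taking the value `lam`
on all of `Min Q`. -/
def IsPerfect {d : ℕ} (Q : Matrix (Fin d) (Fin d) ℝ) (lam : ℝ) : Prop :=
  Q.PosDef ∧ IsLeast {r : ℝ | ∃ x : Fin d → ℤ, x ≠ 0 ∧ qeval Q x = r} lam ∧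
    ∀ Q' : Matrix (Fin d) (Fin d) ℝ, Q'.IsSymm →
      (∀ x : Fin d → ℤ, qeval Q x = lam → qeval Q' x = lam) → Q' = Q

namespace Vor

variable {d : ℕ}

lemma castMat_eq (U : Matrix (Fin d) (Fin d) ℤ) :
    castMat U = (Int.castRingHom ℝ).mapMatrix U := rfl

lemma castMat_mul (A B : Matrix (Fin d) (Fin d) ℤ) :
    castMat (A * B) = castMat A * castMat B := by
  exact Matrix.map_mul (f := Int.castRingHom ℝ)

lemma castMat_one : castMat (1 : Matrix (Fin d) (Fin d) ℤ) = 1 := by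
  simp [castMat_eq]

lemma castMat_transpose (A : Matrix (Fin d) (Fin d) ℤ) :
    castMat Aᵀ = (castMat A)ᵀ := rfl

lemma castMat_det (A : Matrix (Fin d) (Fin d) ℤ) :
    (castMat A).det = ((A.det : ℤ) : ℝ) := by
  rw [castMat_eq, ← RingHom.map_det]
  rfl

lemma castVec_mulVec (U : Matrix (Fin d) (Fin d) ℤ) (x : Fin d → ℤ) :
    castVec (U.mulVec x) = (castMat U).mulVec (castVec x) := by
  funext i
  simp [castVec, castMat, Matrix.mulVec, dotProduct]

lemma qeval_congr (Q : Matrix (Fin d) (Fin d) ℝ) (U : Matrix (Fin d) (Fin d) ℤ)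
    (x : Fin d → ℤ) :
    qeval ((castMat U)ᵀ * Q * castMat U) x = qeval Q (U.mulVec x) := by
  unfold qeval
  rw [castVec_mulVec]
  set V := castMat U
  set c := castVec x
  rw [← Matrix.mulVec_mulVec, ← Matrix.mulVec_mulVec, Matrix.dotProduct_mulVec c Vᵀ,
    Matrix.vecMul_transpose]

/-- Cauchy-Schwarz for a positive semidefinite symmetric real matrix. -/
lemma cs_aux (Q : Matrix (Fin d) (Fin d) ℝ) (hsymm : Qᵀ = Q)
    (hpsd : ∀ v : Fin d → ℝ, 0 ≤ v ⬝ᵥ Q.mulVec v) (u v : Fin d → ℝ) :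
    (u ⬝ᵥ Q.mulVec v) ^ 2 ≤ (u ⬝ᵥ Q.mulVec u) * (v ⬝ᵥ Q.mulVec v) := by
  have hswap : ∀ a b : Fin d → ℝ, a ⬝ᵥ Q.mulVec b = b ⬝ᵥ Q.mulVec a := by
    intro a b
    calc a ⬝ᵥ Q.mulVec b = a ᵥ* Q ⬝ᵥ b := Matrix.dotProduct_mulVec a Q b
      _ = (Qᵀ.mulVec a) ⬝ᵥ b := by rw [← Matrix.vecMul_transpose, Matrix.transpose_transpose]
      _ = b ⬝ᵥ Q.mulVec a := by rw [dotProduct_comm, hsymm]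
  have key : ∀ t : ℝ, 0 ≤ (v ⬝ᵥ Q.mulVec v) * (t * t) + (2 * (u ⬝ᵥ Q.mulVec v)) * t
      + (u ⬝ᵥ Q.mulVec u) := by
    intro t
    have h0 := hpsd (u + t • v)
    have expand : (u + t • v) ⬝ᵥ Q.mulVec (u + t • v)
        = (v ⬝ᵥ Q.mulVec v) * (t * t) + (2 * (u ⬝ᵥ Q.mulVec v)) * t + (u ⬝ᵥ Q.mulVec u) := by
      simp only [Matrix.mulVec_add, Matrix.mulVec_smul, add_dotProduct,
        dotProduct_add, smul_dotProduct, dotProduct_smul, smul_eq_mul]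
      rw [hswap v u]
      ring
    rw [expand] at h0
    exact h0
  have hdisc := discrim_le_zero key
  rw [discrim] at hdisc
  nlinarith [hdisc]


lemma mulVec_cancel {U W : Matrix (Fin d) (Fin d) ℤ} (hWU : W * U = 1)
    {x : Fin d → ℤ} : W.mulVec (U.mulVec x) = x := by
  rw [Matrix.mulVec_mulVec, hWU, Matrix.one_mulVec]

lemma castMat_inv {U W : Matrix (Fin d) (Fin d) ℤ} (hUW : U * W = 1) :
    castMat U * castMat W = 1 := by
  rw [← castMat_mul, hUW, castMat_one]

/-- transport of perfection along a unimodular congruence -/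
lemma isPerfect_congr {Q : Matrix (Fin d) (Fin d) ℝ} {U W : Matrix (Fin d) (Fin d) ℤ}
    (hQ : IsPerfect Q 1) (hUW : U * W = 1) (hWU : W * U = 1) :
    IsPerfect ((castMat U)ᵀ * Q * castMat U) 1 := by
  obtain ⟨hpd, hleast, huniq⟩ := hQ
  have hQsymm : Qᵀ = Q := by
    have := hpd.1
    rwa [Matrix.IsHermitian, Matrix.conjTranspose_eq_transpose_of_trivial] at this
  have hVW : castMat U * castMat W = 1 := castMat_inv hUW
  have hWV : castMat W * castMat U = 1 := castMat_inv hWU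
  refine ⟨?_, ?_, ?_⟩
  · refine Matrix.PosDef.of_dotProduct_mulVec_pos ?_ ?_
    · rw [Matrix.IsHermitian, Matrix.conjTranspose_eq_transpose_of_trivial,
        Matrix.transpose_mul, Matrix.transpose_mul, Matrix.transpose_transpose, hQsymm,
        Matrix.mul_assoc]
    · intro x hx
      have hUx : (castMat U).mulVec x ≠ 0 := by
        intro h0
        apply hx
        have : (castMat W).mulVec ((castMat U).mulVec x) = x := by
          rw [Matrix.mulVec_mulVec, hWV, Matrix.one_mulVec]
        rw [← this, h0, Matrix.mulVec_zero]
      have := hpd.dotProduct_mulVec_pos hUx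
      simp only [star_trivial] at this ⊢
      have heq : x ⬝ᵥ ((castMat U)ᵀ * Q * castMat U).mulVec x
          = ((castMat U).mulVec x) ⬝ᵥ Q.mulVec ((castMat U).mulVec x) := by
        rw [← Matrix.mulVec_mulVec, ← Matrix.mulVec_mulVec,
          Matrix.dotProduct_mulVec x (castMat U)ᵀ, Matrix.vecMul_transpose]
      rw [heq]
      exact this
  · constructor
    · obtain ⟨x, hx, hxe⟩ := hleast.1
      refine ⟨W.mulVec x, ?_, ?_⟩
      · intro h0
        apply hx
        rw [← mulVec_cancel hUW (x := x), h0, Matrix.mulVec_zero]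
      · rw [qeval_congr, mulVec_cancel hUW]
        exact hxe
    · rintro r ⟨x, hx, rfl⟩
      apply hleast.2
      refine ⟨U.mulVec x, ?_, (qeval_congr Q U x).symm⟩
      intro h0
      apply hx
      rw [← mulVec_cancel hWU (x := x), h0, Matrix.mulVec_zero]
  · intro Q' hsymm hagree
    have h2 : (castMat W)ᵀ * Q' * castMat W = Q := by
      apply huniq
      · rw [Matrix.IsSymm, Matrix.transpose_mul, Matrix.transpose_mul,
          Matrix.transpose_transpose, hsymm.eq, Matrix.mul_assoc]
      · intro x hxval
        have : qeval ((castMat W)ᵀ * Q' * castMat W) x = qeval Q' (W.mulVec x) :=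
          qeval_congr Q' W x
        rw [this]
        apply hagree
        rw [qeval_congr, mulVec_cancel hUW]
        exact hxval
    symm
    calc (castMat U)ᵀ * Q * castMat U
        = (castMat U)ᵀ * ((castMat W)ᵀ * Q' * castMat W) * castMat U := by rw [h2]
      _ = ((castMat W * castMat U)ᵀ) * Q' * (castMat W * castMat U) := by
          rw [Matrix.transpose_mul]
          noncomm_ring
      _ = Q' := by rw [hWV]; simp

/-- The linear embedding `(Fin n → ℤ) → (Fin (n+1) → ℤ)` appending a zero. -/
def snocHom (n : ℕ) : (Fin n → ℤ) →ₗ[ℤ] (Fin (n + 1) → ℤ) where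
  toFun w := Fin.snoc w 0
  map_add' a b := by
    funext j
    cases j using Fin.lastCases <;> simp
  map_smul' c a := by
    funext j
    cases j using Fin.lastCases <;> simp

/-- Any sublattice of `ℤ^n` containing `m ℤ^n` is spanned by `n` vectors with entries
bounded by `m`. -/
lemma bounded_span : ∀ (n : ℕ) (Λ : Submodule ℤ (Fin n → ℤ)) (m : ℤ), 0 < m →
    (∀ v : Fin n → ℤ, m • v ∈ Λ) →
    ∃ h : Fin n → (Fin n → ℤ), (∀ i, h i ∈ Λ) ∧
      (∀ v ∈ Λ, v ∈ Submodule.span ℤ (Set.range h)) ∧ (∀ i j, |h i j| ≤ m) := by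
  intro n
  induction n with
  | zero =>
    intro Λ m hm hmem
    refine ⟨fun _ => 0, fun i => Λ.zero_mem, fun v hv => ?_, fun i j => i.elim0⟩
    have : v = 0 := funext fun j => j.elim0
    rw [this]
    exact Submodule.zero_mem _
  | succ n ih =>
    intro Λ m hm hmem
    classical
    set last : Fin (n + 1) := Fin.last n with hlast
    set T : Set ℕ := {k | 0 < k ∧ ∃ v ∈ Λ, v last = (k : ℤ)} with hT
    have hmT : m.toNat ∈ T := by
      refine ⟨by omega, m • Pi.single last 1, hmem _, ?_⟩
      simp [Int.toNat_of_nonneg hm.le]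
    have hTne : ∃ k, k ∈ T := ⟨m.toNat, hmT⟩
    set a : ℕ := Nat.find hTne with ha
    obtain ⟨hapos, g, hgΛ, hga⟩ := Nat.find_spec hTne
    have ham : (a : ℤ) ≤ m := by
      have := Nat.find_min' hTne hmT
      omega
    have hdvd : ∀ v ∈ Λ, (a : ℤ) ∣ v last := by
      intro v hv
      set r := v last % (a : ℤ) with hr
      have hr0 : 0 ≤ r := Int.emod_nonneg _ (by exact_mod_cast hapos.ne')
      have hrlt : r < (a : ℤ) := Int.emod_lt_of_pos _ (by exact_mod_cast hapos)
      by_contra hnd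
      have hrne : r ≠ 0 := fun h0 => hnd (Int.dvd_of_emod_eq_zero h0)
      have hw : v - (v last / (a : ℤ)) • g ∈ Λ := Λ.sub_mem hv (Λ.smul_mem _ hgΛ)
      have hwlast : (v - (v last / (a : ℤ)) • g) last = r := by
        simp only [Pi.sub_apply, Pi.smul_apply, smul_eq_mul, hga]
        rw [hr, Int.emod_def]
        ring
      have hrT : r.toNat ∈ T := by
        refine ⟨by omega, _, hw, ?_⟩
        rw [hwlast]
        omega
      have := Nat.find_min hTne (m := r.toNat) (by omega) hrT
      exact this
    -- the reduced last generator
    set g' : Fin (n + 1) → ℤ := g - m • (fun j => if j = last then 0 else g j / m) with hg'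
    have hg'Λ : g' ∈ Λ := Λ.sub_mem hgΛ (hmem _)
    have hg'last : g' last = (a : ℤ) := by
      simp [hg', hga, ha]
    have hg'bound : ∀ j, |g' j| ≤ m := by
      intro j
      by_cases hj : j = last
      · rw [hj, hg'last, abs_of_nonneg (by positivity : (0:ℤ) ≤ (a:ℤ))]
        exact ham
      · have : g' j = g j % m := by
          simp only [hg', Pi.sub_apply, Pi.smul_apply, smul_eq_mul, if_neg hj]
          rw [Int.emod_def]
        have h1 : 0 ≤ g j % m := Int.emod_nonneg _ hm.ne'
        have h2 : g j % m < m := Int.emod_lt_of_pos _ hm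
        rw [this, abs_of_nonneg h1]
        omega
    -- the smaller lattice
    set Λ₀ : Submodule ℤ (Fin n → ℤ) := Λ.comap (snocHom n) with hΛ₀
    have hmem₀ : ∀ w : Fin n → ℤ, m • w ∈ Λ₀ := by
      intro w
      have : (snocHom n) (m • w) = m • (snocHom n) w := map_smul _ _ _
      simp only [hΛ₀, Submodule.mem_comap, this]
      exact hmem _
    obtain ⟨h', hh'Λ, hh'span, hh'bound⟩ := ih Λ₀ m hm hmem₀
    set h : Fin (n + 1) → (Fin (n + 1) → ℤ) :=
      Fin.snoc (fun i => (snocHom n) (h' i)) g' with hh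
    refine ⟨h, ?_, ?_, ?_⟩
    · intro i
      cases i using Fin.lastCases with
      | last =>
        simp only [hh, Fin.snoc_last]
        exact hg'Λ
      | cast i =>
        simp only [hh, Fin.snoc_castSucc]
        exact hh'Λ i
    · intro v hv
      obtain ⟨c, hc⟩ := hdvd v hv
      have hwΛ : v - c • g' ∈ Λ := Λ.sub_mem hv (Λ.smul_mem _ hg'Λ)
      have hwlast : (v - c • g') last = 0 := by
        simp [hc, hg'last, mul_comm]
      have hsnoc : (snocHom n) (Fin.init (v - c • g')) = v - c • g' := by
        have := Fin.snoc_init_self (v - c • g')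
        rw [hwlast] at this
        exact this
      have hinit : Fin.init (v - c • g') ∈ Λ₀ := by
        simp only [hΛ₀, Submodule.mem_comap, hsnoc]
        exact hwΛ
      have hspan0 := hh'span _ hinit
      have hmap : v - c • g' ∈ Submodule.span ℤ (Set.range h) := by
        rw [← hsnoc]
        have h1 : (snocHom n) (Fin.init (v - c • g')) ∈
            Submodule.map (snocHom n) (Submodule.span ℤ (Set.range h')) :=
          Submodule.mem_map_of_mem hspan0
        rw [Submodule.map_span] at h1
        refine Submodule.span_mono ?_ h1
        rintro _ ⟨_, ⟨i, rfl⟩, rfl⟩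
        refine ⟨Fin.castSucc i, ?_⟩
        simp [hh]
      have hg'mem : g' ∈ Submodule.span ℤ (Set.range h) := by
        apply Submodule.subset_span
        refine ⟨last, ?_⟩
        simp [hh, hlast]
      have := Submodule.add_mem _ hmap (Submodule.smul_mem _ c hg'mem)
      simpa using this
    · intro i j
      cases i using Fin.lastCases with
      | last =>
        simp only [hh, Fin.snoc_last]
        exact hg'bound j
      | cast i =>
        simp only [hh, Fin.snoc_castSucc]
        have hrfl : (snocHom n) (h' i) = Fin.snoc (h' i) 0 := rfl
        rw [hrfl]
        cases j using Fin.lastCases with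
        | last =>
          rw [Fin.snoc_last]
          simpa using hm.le
        | cast j =>
          rw [Fin.snoc_castSucc]
          exact hh'bound i j

lemma smul_vec_cancel {m : ℤ} (hm : m ≠ 0) {x y : Fin d → ℤ}
    (h : m • x = m • y) : x = y := by
  funext p
  have := congrFun h p
  simp only [Pi.smul_apply, smul_eq_mul] at this
  exact mul_left_cancel₀ hm this

/-- Reduction: for any integral matrix `X` with nonzero determinant there is a
unimodular `U` and a bounded integral `H` with `X * H = m • U`. -/
lemma reduction (X : Matrix (Fin d) (Fin d) ℤ) (hX : X.det ≠ 0) :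
    ∃ (U C H : Matrix (Fin d) (Fin d) ℤ) (m : ℤ),
      0 < m ∧ U * C = 1 ∧ C * U = 1 ∧ (∀ i j, |H i j| ≤ m) ∧ X * H = m • U := by
  classical
  set ε : ℤ := if 0 < X.det then 1 else -1 with hε
  set m : ℤ := ε * X.det with hm'
  have hm : 0 < m := by
    rcases lt_trichotomy X.det 0 with h | h | h
    · rw [hm', hε, if_neg (by omega)]
      omega
    · exact absurd h hX
    · rw [hm', hε, if_pos h]
      omega
  set A : Matrix (Fin d) (Fin d) ℤ := ε • X.adjugate with hA
  have hAX : ∀ v : Fin d → ℤ, A.mulVec (X.mulVec v) = m • v := by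
    intro v
    rw [Matrix.mulVec_mulVec, hA, Matrix.smul_mul, Matrix.adjugate_mul,
      smul_smul, ← hm', Matrix.smul_mulVec, Matrix.one_mulVec]
  have hXA : ∀ v : Fin d → ℤ, X.mulVec (A.mulVec v) = m • v := by
    intro v
    rw [Matrix.mulVec_mulVec, hA, Matrix.mul_smul, Matrix.mul_adjugate,
      smul_smul, ← hm', Matrix.smul_mulVec, Matrix.one_mulVec]
  set Λ : Submodule ℤ (Fin d → ℤ) := LinearMap.range A.mulVecLin with hΛ
  have hmem : ∀ v : Fin d → ℤ, m • v ∈ Λ := by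
    intro v
    exact ⟨X.mulVec v, hAX v⟩
  obtain ⟨h, hhΛ, hhspan, hhb⟩ := bounded_span d Λ m hm hmem
  choose w hw using fun i => hhΛ i
  -- hw : A.mulVec (w i) = h i  (via mulVecLin)
  have hw' : ∀ i, A.mulVec (w i) = h i := by
    intro i
    have := hw i
    simpa [Matrix.mulVecLin] using this
  set U : Matrix (Fin d) (Fin d) ℤ := Matrix.of fun p i => w i p with hU
  set H : Matrix (Fin d) (Fin d) ℤ := Matrix.of fun p i => h i p with hH
  have hXh : ∀ i, X.mulVec (h i) = m • w i := by
    intro i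
    rw [← hw' i, hXA]
  have hXH : X * H = m • U := by
    ext p i
    have := congrFun (hXh i) p
    simp only [Matrix.mulVec, dotProduct, Pi.smul_apply, smul_eq_mul] at this
    simp only [Matrix.mul_apply, Matrix.smul_apply, smul_eq_mul, hH, hU, Matrix.of_apply]
    exact this
  -- construct the inverse
  have hcol : ∀ k : Fin d, ∃ c : Fin d → ℤ, U.mulVec c = Pi.single k 1 := by
    intro k
    have hmemk : A.mulVec (Pi.single k 1) ∈ Submodule.span ℤ (Set.range h) :=
      hhspan _ ⟨Pi.single k 1, rfl⟩
    rw [Submodule.mem_span_range_iff_exists_fun] at hmemk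
    obtain ⟨c, hc⟩ := hmemk
    refine ⟨c, ?_⟩
    have happ : X.mulVec (∑ i, c i • h i) = X.mulVec (A.mulVec (Pi.single k 1)) := by
      rw [hc]
    rw [hXA] at happ
    have hsum : X.mulVec (∑ i, c i • h i) = m • (∑ i, c i • w i) := by
      have h1 : X.mulVec (∑ i, c i • h i) = ∑ i, c i • X.mulVec (h i) := by
        show X.mulVecLin (∑ i, c i • h i) = _
        rw [map_sum]
        exact Finset.sum_congr rfl fun i _ => by rw [_root_.map_smul]; rfl
      rw [h1]
      simp only [hXh]
      rw [Finset.smul_sum]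
      congr 1
      funext i
      rw [smul_comm]
    rw [hsum] at happ
    have hcancel : (∑ i, c i • w i) = Pi.single k 1 := smul_vec_cancel hm.ne' happ
    funext p
    rw [← hcancel]
    simp only [Matrix.mulVec, dotProduct, hU, Matrix.of_apply, Finset.sum_apply,
      Pi.smul_apply, smul_eq_mul]
    congr 1
    funext i
    ring
  choose cf hcf using hcol
  set C : Matrix (Fin d) (Fin d) ℤ := Matrix.of fun i k => cf k i with hC
  have hUC : U * C = 1 := by
    ext p k
    have := congrFun (hcf k) p
    simp only [Matrix.mulVec, dotProduct] at this
    simp only [Matrix.mul_apply, hC, Matrix.of_apply]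
    rw [this, Matrix.one_apply, Pi.single_apply]
  exact ⟨U, C, H, m, hm, hUC, mul_eq_one_comm.mp hUC, fun i j => hhb j i, hXH⟩

lemma castMat_smul (m : ℤ) (U : Matrix (Fin d) (Fin d) ℤ) :
    castMat (m • U) = (m : ℝ) • castMat U := by
  ext i j
  simp only [castMat, Matrix.map_apply, Matrix.smul_apply, smul_eq_mul]
  push_cast
  ring

/-- entries of a congruence: `(Vᵀ Q V) p q` is the `Q`-product of columns. -/
lemma congr_entry (Q V : Matrix (Fin d) (Fin d) ℝ) (p q : Fin d) :
    (Vᵀ * Q * V) p q = (fun i => V i p) ⬝ᵥ Q.mulVec (fun i => V i q) := by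
  simp only [Matrix.mul_apply, Matrix.transpose_apply, dotProduct, Matrix.mulVec,
    Finset.sum_mul, Finset.mul_sum]
  rw [Finset.sum_comm]
  apply Finset.sum_congr rfl
  intro a _
  apply Finset.sum_congr rfl
  intro b _
  ring

/-- The reduced form has entries bounded by `d^2`. -/
lemma reduced_entries (Q : Matrix (Fin d) (Fin d) ℝ) (hQsymm : Qᵀ = Q)
    (hpsd : ∀ v : Fin d → ℝ, 0 ≤ v ⬝ᵥ Q.mulVec v)
    (X H U : Matrix (Fin d) (Fin d) ℤ) (m : ℤ) (hm : 0 < m)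
    (hXH : X * H = m • U) (hHb : ∀ i j, |H i j| ≤ m)
    (hcol : ∀ j, qeval Q (fun i => X i j) = 1) :
    ∀ j k, |((castMat U)ᵀ * Q * castMat U) j k| ≤ (d : ℝ) ^ 2 := by
  intro j k
  set V := castMat X with hV
  set G := Vᵀ * Q * V with hG
  have hGb : ∀ p q, |G p q| ≤ 1 := by
    intro p q
    have h1 : G p p = 1 := by
      rw [hG, congr_entry]
      exact hcol p
    have h2 : G q q = 1 := by
      rw [hG, congr_entry]
      exact hcol q
    have hcs := cs_aux Q hQsymm hpsd (fun i => V i p) (fun i => V i q)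
    rw [← congr_entry, ← congr_entry, ← congr_entry, ← hG, h1, h2] at hcs
    have hsq : G p q * G p q ≤ 1 := by nlinarith
    exact abs_le_one_iff_mul_self_le_one.mpr hsq
  have hcast : V * castMat H = (m : ℝ) • castMat U := by
    rw [hV, ← castMat_mul, hXH, castMat_smul]
  set W := castMat U with hW
  have hkey : ((m : ℝ) ^ 2) • (Wᵀ * Q * W) = (castMat H)ᵀ * G * castMat H := by
    have h1 : (castMat H)ᵀ * G * castMat H = (V * castMat H)ᵀ * Q * (V * castMat H) := by
      rw [hG, Matrix.transpose_mul]
      noncomm_ring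
    rw [h1, hcast, Matrix.transpose_smul, Matrix.smul_mul, Matrix.mul_smul,
      Matrix.smul_mul, smul_smul, sq]
  have hentry : (m : ℝ) ^ 2 * ((Wᵀ * Q * W) j k)
      = ∑ p, ∑ q, (H p j : ℝ) * G p q * (H q k : ℝ) := by
    have := congrFun (congrFun hkey j) k
    simp only [Matrix.smul_apply, smul_eq_mul] at this
    rw [this]
    simp only [Matrix.mul_apply, Matrix.transpose_apply, castMat, Matrix.map_apply,
      Finset.sum_mul]
    rw [Finset.sum_comm]
  have hmpos : (0 : ℝ) < (m : ℝ) := by exact_mod_cast hm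
  have hbound : |(m : ℝ) ^ 2 * ((Wᵀ * Q * W) j k)| ≤ (d : ℝ) ^ 2 * (m : ℝ) ^ 2 := by
    rw [hentry]
    calc |∑ p, ∑ q, (H p j : ℝ) * G p q * (H q k : ℝ)|
        ≤ ∑ p, |∑ q, (H p j : ℝ) * G p q * (H q k : ℝ)| := Finset.abs_sum_le_sum_abs _ _
      _ ≤ ∑ p : Fin d, ∑ q : Fin d, |(H p j : ℝ) * G p q * (H q k : ℝ)| := by
          apply Finset.sum_le_sum
          intro p _
          exact Finset.abs_sum_le_sum_abs _ _
      _ ≤ ∑ p : Fin d, ∑ q : Fin d, (m : ℝ) * 1 * (m : ℝ) := by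
          apply Finset.sum_le_sum
          intro p _
          apply Finset.sum_le_sum
          intro q _
          rw [abs_mul, abs_mul]
          have hH1 : |(H p j : ℝ)| ≤ (m : ℝ) := by
            rw [← Int.cast_abs]
            exact_mod_cast hHb p j
          have hH2 : |(H q k : ℝ)| ≤ (m : ℝ) := by
            rw [← Int.cast_abs]
            exact_mod_cast hHb q k
          have hg := hGb p q
          have hm0 : (0:ℝ) ≤ (m:ℝ) := hmpos.le
          have t1 : |(H p j : ℝ)| * |G p q| ≤ (m:ℝ) * 1 :=
            mul_le_mul hH1 hg (abs_nonneg _) hm0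
          have t2 : |(H p j : ℝ)| * |G p q| * |(H q k : ℝ)| ≤ (m:ℝ) * 1 * (m:ℝ) :=
            mul_le_mul t1 hH2 (abs_nonneg _) (by rw [mul_one]; exact hm0)
          exact t2
      _ = (d : ℝ) ^ 2 * (m : ℝ) ^ 2 := by
          simp [Finset.sum_const]
          ring
  rw [abs_mul, abs_of_nonneg (by positivity : (0:ℝ) ≤ (m:ℝ)^2)] at hbound
  calc |(Wᵀ * Q * W) j k| = ((m:ℝ)^2 * |(Wᵀ * Q * W) j k|) / (m:ℝ)^2 := by
        field_simp
    _ ≤ ((d : ℝ)^2 * (m:ℝ)^2) / (m:ℝ)^2 := by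
        apply div_le_div_of_nonneg_right ?_ (by positivity)
        nlinarith [abs_nonneg ((Wᵀ * Q * W) j k)]
    _ = (d : ℝ)^2 := by field_simp

noncomputable def ballVol (d : ℕ) : ℝ := Real.sqrt Real.pi ^ d / Real.Gamma ((d : ℝ) / 2 + 1)

lemma ballVol_pos (d : ℕ) : 0 < ballVol d := by
  apply div_pos
  · exact pow_pos (Real.sqrt_pos.mpr Real.pi_pos) d
  · apply Real.Gamma_pos_of_pos
    positivity

open MeasureTheory MatrixOrder in
lemma det_lower_bound (hd : 1 ≤ d) (Q : Matrix (Fin d) (Fin d) ℝ) (hQ : Q.PosDef)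
    (hmin : ∀ x : Fin d → ℤ, x ≠ 0 → 1 ≤ qeval Q x) :
    (ballVol d / 2 ^ d) ^ 2 ≤ Q.det := by
  classical
  have hne : Nonempty (Fin d) := ⟨⟨0, hd⟩⟩
  set S := CFC.sqrt Q with hS
  have hSS : S * S = Q := CFC.sqrt_mul_sqrt_self Q hQ.posSemidef.nonneg
  have hSsymm : Sᵀ = S := by
    have := (Matrix.nonneg_iff_posSemidef.mp (CFC.sqrt_nonneg Q)).1
    rwa [Matrix.IsHermitian, Matrix.conjTranspose_eq_transpose_of_trivial] at this
  have hdetQ : 0 < Q.det := hQ.det_pos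
  have hdet2 : S.det * S.det = Q.det := by rw [← Matrix.det_mul, hSS]
  have hdetS : S.det ≠ 0 := by
    intro h0
    have h00 : (0:ℝ) = Q.det := by rw [← hdet2, h0, zero_mul]
    exact hdetQ.ne' h00.symm
  -- the sets
  set s : Set (Fin d → ℝ) := {v | v ⬝ᵥ Q.mulVec v < 1} with hs
  set s₀ : Set (Fin d → ℝ) := {w | w ⬝ᵥ w < 1} with hs₀
  have hform : ∀ v : Fin d → ℝ, v ⬝ᵥ Q.mulVec v = (S.mulVec v) ⬝ᵥ (S.mulVec v) := by
    intro v
    conv_lhs => rw [← hSS]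
    rw [← Matrix.mulVec_mulVec, Matrix.dotProduct_mulVec v S]
    congr 1
    rw [← Matrix.vecMul_transpose, hSsymm]
  have hpre : s = (Matrix.toLin' S) ⁻¹' s₀ := by
    ext v
    simp only [hs, hs₀, Set.mem_setOf_eq, Set.mem_preimage, Matrix.toLin'_apply]
    rw [hform]
  -- convexity and symmetry
  set ψ := (WithLp.linearEquiv 2 ℝ (Fin d → ℝ)).symm with hψ
  set B : Set (EuclideanSpace ℝ (Fin d)) := Metric.ball 0 1 with hB
  have hs₀pre : s₀ = ⇑ψ ⁻¹' B := by
    ext w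
    simp only [hs₀, Set.mem_setOf_eq, Set.mem_preimage, hB, Metric.mem_ball,
      dist_zero_right]
    rw [EuclideanSpace.norm_eq]
    rw [show (∑ i, ‖(ψ w) i‖ ^ 2) = w ⬝ᵥ w by
      simp [dotProduct, Real.norm_eq_abs, sq_abs, hψ, sq]]
    rw [Real.sqrt_lt' one_pos]
    norm_num
  have hs₀conv : Convex ℝ s₀ := by
    rw [hs₀pre]
    exact (convex_ball (0 : EuclideanSpace ℝ (Fin d)) 1).linear_preimage ψ.toLinearMap
  have hsconv : Convex ℝ s := by
    rw [hpre]
    exact hs₀conv.linear_preimage _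
  have hssymm : ∀ v ∈ s, -v ∈ s := by
    intro v hv
    simp only [hs, Set.mem_setOf_eq] at hv ⊢
    rwa [Matrix.mulVec_neg, dotProduct_neg, neg_dotProduct, neg_neg]
  -- volume computations
  have hs₀open : IsOpen s₀ := by
    have hc : Continuous fun w : Fin d → ℝ => w ⬝ᵥ w := by
      unfold dotProduct
      exact continuous_finset_sum _ fun i _ => (continuous_apply i).mul (continuous_apply i)
    exact isOpen_lt hc continuous_const
  have hvol₀ : volume s₀ = ENNReal.ofReal (ballVol d) := by
    have hmp := EuclideanSpace.volume_preserving_symm_measurableEquiv_toLp (Fin d)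
    have hpreim : ⇑(MeasurableEquiv.toLp 2 (Fin d → ℝ)).symm ⁻¹' s₀ = B := by
      ext w
      simp only [Set.mem_preimage, hs₀, Set.mem_setOf_eq, hB, Metric.mem_ball,
        dist_zero_right]
      rw [EuclideanSpace.norm_eq]
      rw [show (∑ i, ‖w i‖ ^ 2) = (MeasurableEquiv.toLp 2 (Fin d → ℝ)).symm w ⬝ᵥ
        (MeasurableEquiv.toLp 2 (Fin d → ℝ)).symm w by
          simp [dotProduct, Real.norm_eq_abs, sq_abs, sq]]
      rw [Real.sqrt_lt' one_pos]
      norm_num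
    have := hmp.measure_preimage (hs₀open.measurableSet.nullMeasurableSet)
    rw [hpreim] at this
    rw [← this, hB, EuclideanSpace.volume_ball]
    simp only [Fintype.card_fin]
    rw [ENNReal.ofReal_one, one_pow, one_mul, ballVol]
  have hdetlin : LinearMap.det (Matrix.toLin' S) = S.det := LinearMap.det_toLin' S
  have hvols : volume s = ENNReal.ofReal |S.det|⁻¹ * ENNReal.ofReal (ballVol d) := by
    rw [hpre, MeasureTheory.Measure.addHaar_preimage_linearMap volume
      (by rw [hdetlin]; exact hdetS), hdetlin, hvol₀, abs_inv]
  -- Minkowski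
  by_contra hcon
  push_neg at hcon
  set L := (Submodule.span ℤ (Set.range ⇑(Pi.basisFun ℝ (Fin d)))).toAddSubgroup with hL
  have hcount : Countable L := by
    change Countable (Submodule.span ℤ (Set.range ⇑(Pi.basisFun ℝ (Fin d))))
    infer_instance
  have fund := ZSpan.isAddFundamentalDomain' (Pi.basisFun ℝ (Fin d)) volume
  have hvolF : volume (ZSpan.fundamentalDomain (Pi.basisFun ℝ (Fin d))) = 1 := by
    rw [ZSpan.volume_fundamentalDomain]
    have : (Matrix.of ⇑(Pi.basisFun ℝ (Fin d))) = (1 : Matrix (Fin d) (Fin d) ℝ) := by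
      ext i j
      simp [Matrix.one_apply, Pi.basisFun_apply, Pi.single_apply, eq_comm]
    rw [this]
    simp
  have hδ : |S.det| < ballVol d / 2 ^ d := by
    have h1 : |S.det| ^ 2 = Q.det := by rw [sq_abs, sq, hdet2]
    have ht : (0:ℝ) < ballVol d / 2 ^ d := by
      have := ballVol_pos d
      positivity
    refine lt_of_pow_lt_pow_left₀ 2 ht.le ?_
    rw [h1]
    exact hcon
  have hvolineq : volume (ZSpan.fundamentalDomain (Pi.basisFun ℝ (Fin d)))
      * 2 ^ Module.finrank ℝ (Fin d → ℝ) < volume s := by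
    rw [hvolF, one_mul, hvols, Module.finrank_fin_fun]
    rw [← ENNReal.ofReal_mul (by positivity)]
    have h2d : (2 : ENNReal) ^ d = ENNReal.ofReal ((2 : ℝ) ^ d) := by
      rw [ENNReal.ofReal_pow (by norm_num)]
      norm_num
    have hbpos := ballVol_pos d
    have hδpos : 0 < |S.det| := abs_pos.mpr hdetS
    rw [h2d, ENNReal.ofReal_lt_ofReal_iff (by positivity)]
    have h2 : |S.det| * 2 ^ d < ballVol d := by
      rw [lt_div_iff₀ (by positivity : (0:ℝ) < 2 ^ d)] at hδ
      exact hδ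
    calc (2:ℝ)^d = |S.det|⁻¹ * (|S.det| * 2 ^ d) := by field_simp
      _ < |S.det|⁻¹ * ballVol d := mul_lt_mul_of_pos_left h2 (inv_pos.mpr hδpos)
  obtain ⟨x, hx0, hxs⟩ := exists_ne_zero_mem_lattice_of_measure_mul_two_pow_lt_measure
    fund hssymm hsconv hvolineq
  -- extract an integral vector
  have hxmem : ∀ i, ∃ z : ℤ, (z : ℝ) = (x : Fin d → ℝ) i := by
    have hmem : (x : Fin d → ℝ) ∈ Submodule.span ℤ (Set.range ⇑(Pi.basisFun ℝ (Fin d))) :=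
      x.2
    intro i
    have := ((Pi.basisFun ℝ (Fin d)).mem_span_iff_repr_mem ℤ _).mp hmem i
    rw [Pi.basisFun_repr] at this
    obtain ⟨z, hz⟩ := this
    exact ⟨z, hz⟩
  choose y hy using hxmem
  have hcast : castVec y = (x : Fin d → ℝ) := funext hy
  have hy0 : y ≠ 0 := by
    intro h0
    apply hx0
    have : (x : Fin d → ℝ) = 0 := by
      rw [← hcast, h0]
      funext i
      simp [castVec]
    exact Subtype.ext this
  have hlt : qeval Q y < 1 := by
    unfold qeval
    rw [hcast]
    exact hxs
  exact absurd (hmin y hy0) (not_le.mpr hlt)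

lemma det_bound (B : Matrix (Fin d) (Fin d) ℝ) (b : ℝ)
    (h : ∀ i j, |B i j| ≤ b) : |B.det| ≤ (Nat.factorial d : ℝ) * b ^ d := by
  rw [Matrix.det_apply]
  calc |∑ σ : Equiv.Perm (Fin d), Equiv.Perm.sign σ • ∏ i, B (σ i) i|
      ≤ ∑ σ : Equiv.Perm (Fin d), |Equiv.Perm.sign σ • ∏ i, B (σ i) i| :=
        Finset.abs_sum_le_sum_abs _ _
    _ ≤ ∑ _σ : Equiv.Perm (Fin d), b ^ d := by
        apply Finset.sum_le_sum
        intro σ _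
        have habs : |Equiv.Perm.sign σ • ∏ i, B (σ i) i| = |∏ i, B (σ i) i| := by
          rcases Int.units_eq_one_or (Equiv.Perm.sign σ) with h1 | h1 <;>
            simp [h1, Units.smul_def]
        rw [habs, Finset.abs_prod]
        calc ∏ i, |B (σ i) i| ≤ ∏ _i : Fin d, b :=
              Finset.prod_le_prod (fun i _ => abs_nonneg _) (fun i _ => h _ _)
          _ = b ^ d := by simp
    _ = (Nat.factorial d : ℝ) * b ^ d := by
        rw [Finset.sum_const, Finset.card_univ, Fintype.card_perm, Fintype.card_fin,
          nsmul_eq_mul]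

lemma adjugate_bound (Q : Matrix (Fin d) (Fin d) ℝ) (b : ℝ)
    (h : ∀ i j, |Q i j| ≤ b) (i j : Fin d) :
    |Q.adjugate i j| ≤ (Nat.factorial d : ℝ) * (max b 1) ^ d := by
  rw [Matrix.adjugate_apply]
  apply det_bound
  intro p q
  by_cases hp : p = j
  · rw [hp, Matrix.updateRow_self, Pi.single_apply]
    by_cases hq : q = i
    · rw [if_pos hq, abs_one]
      exact le_max_right _ _
    · rw [if_neg hq, abs_zero]
      exact le_trans zero_le_one (le_max_right _ _)
  · rw [Matrix.updateRow_ne hp]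
    exact le_trans (h p q) (le_max_left _ _)

lemma min_box (Q : Matrix (Fin d) (Fin d) ℝ) (hQsymm : Qᵀ = Q)
    (hpsd : ∀ v : Fin d → ℝ, 0 ≤ v ⬝ᵥ Q.mulVec v)
    (c b : ℝ) (hc : 0 < c)
    (hdet : c ≤ Q.det) (hent : ∀ i j, |Q i j| ≤ b)
    (x : Fin d → ℤ) (hx : qeval Q x = 1) (j : Fin d) :
    ((x j : ℝ)) ^ 2 ≤ (Nat.factorial d : ℝ) * (max b 1) ^ d * d / c := by
  classical
  set cx := castVec x with hcx
  set A := (Nat.factorial d : ℝ) * (max b 1) ^ d with hA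
  have hA0 : 0 ≤ A := by positivity
  have hdet0 : 0 < Q.det := lt_of_lt_of_le hc hdet
  set w := (Q.det)⁻¹ • (Q.adjugate.mulVec cx) with hw
  have hQw : Q.mulVec w = cx := by
    rw [hw, Matrix.mulVec_smul, Matrix.mulVec_mulVec, Matrix.mul_adjugate,
      Matrix.smul_mulVec, Matrix.one_mulVec, smul_smul,
      inv_mul_cancel₀ hdet0.ne', one_smul]
  have hn2 : cx ⬝ᵥ cx = ∑ i, (cx i) ^ 2 := by
    simp [dotProduct, sq]
  have hn2_0 : 0 ≤ cx ⬝ᵥ cx := by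
    rw [hn2]
    positivity
  have hxj : (cx j) ^ 2 ≤ cx ⬝ᵥ cx := by
    rw [hn2]
    exact Finset.single_le_sum (f := fun i => (cx i) ^ 2) (fun i _ => sq_nonneg _)
      (Finset.mem_univ j)
  -- Cauchy-Schwarz step
  have hcs := cs_aux Q hQsymm hpsd cx w
  rw [hQw] at hcs
  have hq1 : cx ⬝ᵥ Q.mulVec cx = 1 := hx
  rw [hq1, one_mul] at hcs
  -- bound the adjugate quadratic form
  have hsum1 : (∑ i, |cx i|) ^ 2 ≤ (d : ℝ) * (cx ⬝ᵥ cx) := by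
    have := Finset.sum_mul_sq_le_sq_mul_sq Finset.univ (fun _ : Fin d => (1 : ℝ))
      (fun i => |cx i|)
    simp only [one_mul, one_pow, sq_abs] at this
    calc (∑ i, |cx i|) ^ 2 ≤ (∑ _i : Fin d, (1:ℝ)) * ∑ i, (cx i) ^ 2 := this
      _ = (d : ℝ) * (cx ⬝ᵥ cx) := by
          rw [hn2]
          simp
  have hadj : |(Q.adjugate.mulVec cx) ⬝ᵥ cx| ≤ A * (∑ i, |cx i|) ^ 2 := by
    have hexp : (Q.adjugate.mulVec cx) ⬝ᵥ cx = ∑ i, ∑ k, Q.adjugate i k * cx k * cx i := by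
      simp [Matrix.mulVec, dotProduct, Finset.sum_mul]
    rw [hexp]
    calc |∑ i, ∑ k, Q.adjugate i k * cx k * cx i|
        ≤ ∑ i, |∑ k, Q.adjugate i k * cx k * cx i| := Finset.abs_sum_le_sum_abs _ _
      _ ≤ ∑ i, ∑ k, |Q.adjugate i k * cx k * cx i| := by
          apply Finset.sum_le_sum
          intro i _
          exact Finset.abs_sum_le_sum_abs _ _
      _ ≤ ∑ i, ∑ k, A * (|cx k| * |cx i|) := by
          apply Finset.sum_le_sum
          intro i _
          apply Finset.sum_le_sum
          intro k _
          rw [abs_mul, abs_mul]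
          have h1 := adjugate_bound Q b hent i k
          have h2 : (0:ℝ) ≤ |cx k| := abs_nonneg _
          have h3 : (0:ℝ) ≤ |cx i| := abs_nonneg _
          calc |Q.adjugate i k| * |cx k| * |cx i| ≤ A * |cx k| * |cx i| := by
                apply mul_le_mul_of_nonneg_right _ h3
                exact mul_le_mul_of_nonneg_right h1 h2
            _ = A * (|cx k| * |cx i|) := by ring
      _ = A * (∑ i, |cx i|) ^ 2 := by
          simp only [← Finset.mul_sum]
          rw [sq, Finset.sum_mul_sum]
          congr 1
          apply Finset.sum_congr rfl
          intro i _
          apply Finset.sum_congr rfl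
          intro k _
          ring
  -- put it together
  set n2 := cx ⬝ᵥ cx with hn2d
  have hkey : n2 ^ 2 ≤ (Q.det)⁻¹ * (A * ((d:ℝ) * n2)) := by
    have hwcx : w ⬝ᵥ cx = (Q.det)⁻¹ * ((Q.adjugate.mulVec cx) ⬝ᵥ cx) := by
      rw [hw, smul_dotProduct]
      simp
    calc n2 ^ 2 ≤ w ⬝ᵥ cx := hcs
      _ = (Q.det)⁻¹ * ((Q.adjugate.mulVec cx) ⬝ᵥ cx) := hwcx
      _ ≤ (Q.det)⁻¹ * (A * ((d:ℝ) * n2)) := by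
          apply mul_le_mul_of_nonneg_left _ (inv_nonneg.mpr hdet0.le)
          calc (Q.adjugate.mulVec cx) ⬝ᵥ cx ≤ |(Q.adjugate.mulVec cx) ⬝ᵥ cx| := le_abs_self _
            _ ≤ A * (∑ i, |cx i|) ^ 2 := hadj
            _ ≤ A * ((d:ℝ) * n2) := mul_le_mul_of_nonneg_left hsum1 hA0
  have hn2le : n2 ≤ A * (d:ℝ) / c := by
    rcases eq_or_lt_of_le hn2_0 with h0 | h0
    · rw [← h0]
      positivity
    · have hstep : n2 ≤ (Q.det)⁻¹ * (A * (d:ℝ)) := by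
        have := hkey
        rw [sq] at this
        have h2 : n2 * n2 ≤ ((Q.det)⁻¹ * (A * (d:ℝ))) * n2 := by
          calc n2 * n2 ≤ (Q.det)⁻¹ * (A * ((d:ℝ) * n2)) := this
            _ = ((Q.det)⁻¹ * (A * (d:ℝ))) * n2 := by ring
        exact le_of_mul_le_mul_right h2 h0
      calc n2 ≤ (Q.det)⁻¹ * (A * (d:ℝ)) := hstep
        _ ≤ c⁻¹ * (A * (d:ℝ)) := by
            apply mul_le_mul_of_nonneg_right _ (by positivity)
            exact inv_anti₀ hc hdet
        _ = A * (d:ℝ) / c := by ring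
  calc ((x j : ℝ)) ^ 2 = (cx j) ^ 2 := by rw [hcx]; rfl
    _ ≤ n2 := hxj
    _ ≤ A * (d:ℝ) / c := hn2le
    _ = (Nat.factorial d : ℝ) * (max b 1) ^ d * d / c := by rw [hA]

lemma posdef_symm {Q : Matrix (Fin d) (Fin d) ℝ} (h : Q.PosDef) : Qᵀ = Q := by
  have := h.1
  rwa [Matrix.IsHermitian, Matrix.conjTranspose_eq_transpose_of_trivial] at this

lemma posdef_psd {Q : Matrix (Fin d) (Fin d) ℝ} (h : Q.PosDef) :
    ∀ v : Fin d → ℝ, 0 ≤ v ⬝ᵥ Q.mulVec v := by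
  intro v
  rcases eq_or_ne v 0 with rfl | hv
  · simp
  · have := h.dotProduct_mulVec_pos hv
    simp only [star_trivial] at this
    exact this.le

lemma exists_min_basis (Q : Matrix (Fin d) (Fin d) ℝ) (hQ : IsPerfect Q 1) :
    ∃ X : Matrix (Fin d) (Fin d) ℤ, X.det ≠ 0 ∧ ∀ j, qeval Q (fun i => X i j) = 1 := by
  classical
  obtain ⟨hpd, hleast, huniq⟩ := hQ
  set M : Set (Fin d → ℤ) := {y | qeval Q y = 1} with hM
  set s : Set (Fin d → ℝ) := castVec '' M with hs
  have hspan : Submodule.span ℝ s = ⊤ := by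
    by_contra hne
    have hlt : Submodule.span ℝ s < ⊤ := lt_top_iff_ne_top.mpr hne
    obtain ⟨f, hf0, hfmap⟩ := Submodule.exists_dual_map_eq_bot_of_lt_top hlt inferInstance
    set v : Fin d → ℝ := fun i => f (Pi.single i 1) with hv
    have hfv : ∀ w : Fin d → ℝ, f w = v ⬝ᵥ w := by
      intro w
      have hw : w = ∑ i, Pi.single i (w i) := (Finset.univ_sum_single w).symm
      have hsingle : ∀ i, Pi.single i (w i) = w i • (Pi.single i 1 : Fin d → ℝ) := by
        intro i
        funext j
        by_cases hj : j = i <;> simp [Pi.single_apply, hj]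
      rw [hw, map_sum]
      unfold dotProduct
      apply Finset.sum_congr rfl
      intro i _
      rw [hsingle i, _root_.map_smul]
      simp [hv, mul_comm]
    have hvanish : ∀ w ∈ Submodule.span ℝ s, f w = 0 := by
      intro w hw
      have : f w ∈ Submodule.map f (Submodule.span ℝ s) := Submodule.mem_map_of_mem hw
      rw [hfmap] at this
      exact (Submodule.mem_bot ℝ).mp this
    set Q' : Matrix (Fin d) (Fin d) ℝ := Q + Matrix.vecMulVec v v with hQ'
    have hQ'symm : Q'.IsSymm := by
      show Q'ᵀ = Q'
      rw [hQ', Matrix.transpose_add, posdef_symm hpd]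
      congr 1
      ext i j
      simp [Matrix.transpose_apply, Matrix.vecMulVec_apply, mul_comm]
    have hvmv : ∀ cy : Fin d → ℝ, (Matrix.vecMulVec v v).mulVec cy = (v ⬝ᵥ cy) • v := by
      intro cy
      funext i
      simp only [Matrix.mulVec, dotProduct, Matrix.vecMulVec_apply, Pi.smul_apply,
        smul_eq_mul]
      rw [Finset.sum_mul]
      apply Finset.sum_congr rfl
      intro j _
      ring
    have hagree : ∀ y : Fin d → ℤ, qeval Q y = 1 → qeval Q' y = 1 := by
      intro y hy
      have hymem : castVec y ∈ Submodule.span ℝ s :=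
        Submodule.subset_span ⟨y, hy, rfl⟩
      have hzero : v ⬝ᵥ castVec y = 0 := by
        rw [← hfv]
        exact hvanish _ hymem
      unfold qeval
      rw [hQ', Matrix.add_mulVec, dotProduct_add, hvmv, dotProduct_smul,
        dotProduct_comm (castVec y) v, hzero]
      simp only [smul_eq_mul, mul_zero, add_zero]
      exact hy
    have hQ'Q : Q' = Q := huniq Q' hQ'symm hagree
    have hvv : Matrix.vecMulVec v v = 0 := by
      have := hQ'Q
      rw [hQ'] at this
      exact add_left_cancel (a := Q) (by rw [this, add_zero])
    have hv0 : v = 0 := by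
      funext i
      have := congrFun (congrFun hvv i) i
      simp only [Matrix.vecMulVec_apply, Matrix.zero_apply] at this
      exact mul_self_eq_zero.mp this
    apply hf0
    apply LinearMap.ext
    intro w
    rw [hfv, hv0]
    simp
  obtain ⟨t, hts, htspan, htli⟩ := exists_linearIndependent ℝ s
  rw [hspan] at htspan
  have htfin : t.Finite := htli.setFinite
  letI := htfin.fintype
  have htop : ⊤ ≤ Submodule.span ℝ (Set.range (Subtype.val : t → (Fin d → ℝ))) := by
    rw [Subtype.range_coe_subtype]
    rw [show {x | x ∈ t} = t from rfl, htspan]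
  set B : Module.Basis t ℝ (Fin d → ℝ) := Module.Basis.mk htli htop with hB
  have hcard : Fintype.card t = d := by
    rw [← Module.finrank_eq_card_basis B, Module.finrank_fin_fun]
  set e : t ≃ Fin d := Fintype.equivFinOfCardEq hcard with he
  set z : Fin d → (Fin d → ℝ) := fun j => (e.symm j : Fin d → ℝ) with hz
  have hzli : LinearIndependent ℝ z := htli.comp e.symm e.symm.injective
  have hzmem : ∀ j, ∃ y ∈ M, castVec y = z j := by
    intro j
    have : z j ∈ s := hts (e.symm j).2
    obtain ⟨y, hy, hyz⟩ := this
    exact ⟨y, hy, hyz⟩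
  choose y hyM hyz using hzmem
  refine ⟨Matrix.of fun i j => y j i, ?_, ?_⟩
  · intro hdet0
    have hcast0 : (castMat (Matrix.of fun i j => y j i)).det = 0 := by
      rw [castMat_det, hdet0]
      simp
    obtain ⟨w, hw0, hww⟩ := Matrix.exists_mulVec_eq_zero_iff.mpr hcast0
    have hcomb : ∑ j, w j • z j = 0 := by
      funext i
      have := congrFun hww i
      simp only [Matrix.mulVec, dotProduct, castMat, Matrix.map_apply,
        Matrix.of_apply, Pi.zero_apply] at this
      simp only [Finset.sum_apply, Pi.smul_apply, smul_eq_mul, Pi.zero_apply]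
      rw [← this]
      apply Finset.sum_congr rfl
      intro k _
      have : (y k i : ℝ) = z k i := congrFun (hyz k) i
      rw [← this]
      ring
    have := Fintype.linearIndependent_iff.mp hzli w hcomb
    exact hw0 (funext this)
  · intro j
    have : (fun i => (Matrix.of fun i j => y j i) i j) = y j := rfl
    rw [this]
    exact hyM j

end Vor

open Vor in
/-- Voronoi's finiteness theorem. -/
theorem stmt9 (d : ℕ) (hd : 1 ≤ d) :
    ∃ (n : ℕ) (Qs : Fin n → Matrix (Fin d) (Fin d) ℝ),
      (∀ i, IsPerfect (Qs i) 1) ∧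
      ∀ Q : Matrix (Fin d) (Fin d) ℝ, IsPerfect Q 1 →
        ∃ (i : Fin n) (U : Matrix (Fin d) (Fin d) ℤ),
          (U.det = 1 ∨ U.det = -1) ∧
          Q = (castMat U)ᵀ * Qs i * castMat U := by
  classical
  set b : ℝ := (d : ℝ) ^ 2 with hb
  set c : ℝ := (ballVol d / 2 ^ d) ^ 2 with hc'
  have hc : 0 < c := by
    have := ballVol_pos d
    positivity
  set R : ℝ := (Nat.factorial d : ℝ) * (max b 1) ^ d * d / c with hR
  have hR0 : 0 ≤ R := by
    have hm1 : (0:ℝ) ≤ max b 1 := le_trans zero_le_one (le_max_right _ _)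
    positivity
  set K : ℕ := ⌈R⌉₊ + 1 with hK
  have hRK : R ≤ (K : ℝ) := by
    calc R ≤ (⌈R⌉₊ : ℝ) := Nat.le_ceil R
      _ ≤ (K : ℝ) := by
          rw [hK]
          push_cast
          linarith
  have hK1 : (1 : ℝ) ≤ (K : ℝ) := by
    rw [hK]
    push_cast
    linarith [Nat.cast_nonneg (α := ℝ) ⌈R⌉₊]
  set T : Set (Matrix (Fin d) (Fin d) ℝ) :=
    {Q | IsPerfect Q 1 ∧ ∀ x : Fin d → ℤ, qeval Q x = 1 → ∀ j, |x j| ≤ (K : ℤ)} with hT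
  -- T is finite
  have hTfin : T.Finite := by
    set S0 : Set (Fin d → ℤ) := {x | ∀ j, |x j| ≤ (K : ℤ)} with hS0'
    have hS0 : S0.Finite := by
      apply Set.Finite.subset (Set.Finite.pi (fun _ : Fin d => Set.finite_Icc (-(K:ℤ)) K))
      intro x hx
      rw [Set.mem_pi]
      intro j _
      rw [Set.mem_Icc]
      exact abs_le.mp (hx j)
    apply Set.Finite.of_finite_image (f := fun Q => {x : Fin d → ℤ | qeval Q x = 1})
    · apply Set.Finite.subset hS0.finite_subsets
      rintro _ ⟨Q, hQ, rfl⟩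
      intro x hx
      exact hQ.2 x hx
    · rintro Q1 hQ1 Q2 hQ2 heq
      have hsymm2 : Q2.IsSymm := posdef_symm hQ2.1.1
      have heq' : {x : Fin d → ℤ | qeval Q1 x = 1} = {x : Fin d → ℤ | qeval Q2 x = 1} := heq
      have hagree : ∀ x : Fin d → ℤ, qeval Q1 x = 1 → qeval Q2 x = 1 := by
        intro x hx
        have hmem : x ∈ {x : Fin d → ℤ | qeval Q1 x = 1} := hx
        rw [heq'] at hmem
        exact hmem
      exact (hQ1.1.2.2 Q2 hsymm2 hagree).symm
  obtain ⟨n, fn, hfn⟩ := hTfin.fin_embedding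
  refine ⟨n, fun i => fn i, ?_, ?_⟩
  · intro i
    have : (fn i : Matrix (Fin d) (Fin d) ℝ) ∈ T := by
      rw [← hfn]
      exact Set.mem_range_self i
    exact this.1
  · intro Q hQ
    obtain ⟨X, hXdet, hXcol⟩ := exists_min_basis Q hQ
    obtain ⟨U, C, H, m, hm, hUC, hCU, hHb, hXH⟩ := reduction X hXdet
    set Qt := (castMat U)ᵀ * Q * castMat U with hQt
    have hQtperf : IsPerfect Qt 1 := isPerfect_congr hQ hUC hCU
    have hent : ∀ j k, |Qt j k| ≤ b :=
      reduced_entries Q (posdef_symm hQ.1) (posdef_psd hQ.1) X H U m hm hXH hHb hXcol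
    have hmin : ∀ x : Fin d → ℤ, x ≠ 0 → 1 ≤ qeval Qt x := by
      intro x hx
      exact hQtperf.2.1.2 ⟨x, hx, rfl⟩
    have hdet : c ≤ Qt.det := det_lower_bound hd Qt hQtperf.1 hmin
    have hbox : ∀ x : Fin d → ℤ, qeval Qt x = 1 → ∀ j, |x j| ≤ (K : ℤ) := by
      intro x hx j
      have h2 := min_box Qt (posdef_symm hQtperf.1) (posdef_psd hQtperf.1) c b hc hdet
        hent x hx j
      rw [← hR] at h2
      have hsq : ((x j : ℝ)) ^ 2 ≤ (K : ℝ) ^ 2 := by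
        calc ((x j : ℝ)) ^ 2 ≤ R := h2
          _ ≤ (K : ℝ) := hRK
          _ ≤ (K : ℝ) ^ 2 := by nlinarith
      have habs : |(x j : ℝ)| ≤ (K : ℝ) := by
        nlinarith [abs_nonneg ((x j : ℝ)), sq_abs ((x j : ℝ))]
      rw [← Int.cast_abs] at habs
      exact_mod_cast habs
    have hQtT : Qt ∈ T := ⟨hQtperf, hbox⟩
    have : Qt ∈ Set.range fn := by rw [hfn]; exact hQtT
    obtain ⟨i, hi⟩ := this
    have hdetC : C.det = 1 ∨ C.det = -1 := by
      have h1 : C.det * U.det = 1 := by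
        have := congrArg Matrix.det hCU
        rwa [Matrix.det_mul, Matrix.det_one] at this
      rcases Int.mul_eq_one_iff_eq_one_or_neg_one.mp h1 with ⟨h2, _⟩ | ⟨h2, _⟩
      · exact Or.inl h2
      · exact Or.inr h2
    refine ⟨i, C, hdetC, ?_⟩
    have hi' : (fn i : Matrix (Fin d) (Fin d) ℝ) = Qt := hi
    show Q = (castMat C)ᵀ * fn i * castMat C
    rw [hi']
    have hWV : castMat C * castMat U = 1 := castMat_inv hCU
    calc Q = 1ᵀ * Q * 1 := by simp
      _ = (castMat U * castMat C)ᵀ * Q * (castMat U * castMat C) := by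
          rw [castMat_inv hUC]
      _ = (castMat C)ᵀ * Qt * castMat C := by
          rw [hQt, Matrix.transpose_mul]
          noncomm_ring
end
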